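/- arXiv:2605.31379 — 5 statements merged into one kernel-verified Lean document; each statement's English description precedes it below -/
import Mathlib

section
/- For any natural number n ≥ 3, the integral of Φ_n(y)·|y| over [-π, π) is at most 3π²·(log n)/n, where Φ_n is the n-th Fejér kernel. -/
open Real MeasureTheory

/-- The `n`-th Fejér kernel `Φ_n(y) = (1/n)·sin²(ny/2)/sin²(y/2)`, extended by `Φ_n(0) = n`. -/
noncomputable def fejerKernel (n : ℕ) (y : ℝ) : ℝ :=
  if y = 0 then n else (1 / n) * Real.sin (n * y / 2) ^ 2 / Real.sin (y / 2) ^ 2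

open intervalIntegral

noncomputable def fejerBound (n : ℕ) (y : ℝ) : ℝ :=
  if |y| ≤ π / n then n * |y| else π ^ 2 / (n * |y|)

lemma abs_sin_nat_mul_le' (k : ℕ) (x : ℝ) : |Real.sin (k * x)| ≤ k * |Real.sin x| := by
  induction k with
  | zero => simp
  | succ m ih =>
    have h : ((m : ℝ) + 1) * x = m * x + x := by ring
    push_cast
    rw [h, Real.sin_add]
    have c1 := Real.abs_cos_le_one x
    have c2 := Real.abs_cos_le_one (m*x)
    have s1 := abs_nonneg (Real.sin (m*x))
    have s2 := abs_nonneg (Real.sin x)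
    calc |Real.sin (m*x) * Real.cos x + Real.cos (m*x) * Real.sin x|
        ≤ |Real.sin (m*x) * Real.cos x| + |Real.cos (m*x) * Real.sin x| := abs_add_le _ _
      _ ≤ |Real.sin (m*x)| + |Real.sin x| := by
          rw [abs_mul, abs_mul]; nlinarith [abs_nonneg (Real.cos x), abs_nonneg (Real.cos (m*x))]
      _ ≤ ((m : ℝ) + 1) * |Real.sin x| := by nlinarith

lemma fejer_le_bound (n : ℕ) (hn : 3 ≤ n) {y : ℝ} (hy : y ∈ Set.Ico (-π) π) :
    fejerKernel n y * |y| ≤ fejerBound n y := by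
  have hnp : (0 : ℝ) < n := by positivity
  obtain ⟨h1, h2⟩ := hy
  have hpi := Real.pi_pos
  rcases eq_or_ne y 0 with rfl | hy0
  · simp [fejerKernel, fejerBound, le_of_lt (div_pos pi_pos hnp)]
  have hyabs : |y| ≤ π := abs_le.2 ⟨h1, h2.le⟩
  have hsin : Real.sin (y / 2) ≠ 0 := by
    intro h
    have := (Real.sin_eq_zero_iff_of_lt_of_lt (x := y/2) (by linarith) (by linarith)).1 h
    exact hy0 (by linarith)
  have hs2 : 0 < Real.sin (y / 2) ^ 2 := by positivity
  have hya : 0 < |y| := abs_pos.2 hy0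
  rw [fejerKernel, fejerBound, if_neg hy0]
  have key : Real.sin (n * y / 2) ^ 2 ≤ (n : ℝ) ^ 2 * Real.sin (y / 2) ^ 2 := by
    have h := abs_sin_nat_mul_le' n (y / 2)
    have h' : |Real.sin (n * y / 2)| ≤ n * |Real.sin (y/2)| := by
      rw [show (n : ℝ) * y / 2 = n * (y / 2) by ring]; exact h
    calc Real.sin (n * y / 2) ^ 2 = |Real.sin (n * y / 2)| ^ 2 := (sq_abs _).symm
      _ ≤ ((n : ℝ) * |Real.sin (y/2)|) ^ 2 := by
          gcongr
      _ = (n : ℝ) ^ 2 * Real.sin (y/2) ^ 2 := by rw [mul_pow, sq_abs]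
  split_ifs with hc
  · -- kernel ≤ n
    have hker : (1 / n) * Real.sin (n * y / 2) ^ 2 / Real.sin (y / 2) ^ 2 ≤ (n : ℝ) := by
      rw [div_le_iff₀ hs2]
      calc (1 / (n:ℝ)) * Real.sin (n * y / 2) ^ 2
          ≤ (1 / n) * ((n:ℝ)^2 * Real.sin (y/2)^2) := by gcongr
        _ = (n:ℝ) * Real.sin (y/2)^2 := by field_simp
    exact mul_le_mul_of_nonneg_right hker (abs_nonneg _)
  · -- |y| > π/n case
    push_neg at hc
    have hsinlow : |y| / π ≤ |Real.sin (y / 2)| := by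
      have habs2 : |y / 2| ≤ π / 2 := by
        rw [abs_div, abs_of_pos (by norm_num : (0:ℝ) < 2)]; linarith
      have := Real.mul_abs_le_abs_sin habs2
      rw [abs_div, abs_of_pos (by norm_num : (0:ℝ) < 2)] at this
      calc |y| / π = 2 / π * (|y| / 2) := by field_simp
        _ ≤ |Real.sin (y / 2)| := this
    have h2' : |y| ^ 2 ≤ π ^ 2 * Real.sin (y / 2) ^ 2 := by
      calc |y| ^ 2 = (|y| / π) ^ 2 * π ^ 2 := by field_simp
        _ ≤ |Real.sin (y / 2)| ^ 2 * π ^ 2 := by gcongr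
        _ = π ^ 2 * Real.sin (y / 2) ^ 2 := by rw [sq_abs]; ring
    rw [div_mul_eq_mul_div, div_le_div_iff₀ hs2 (by positivity)]
    have hcancel : 1 / (n:ℝ) * Real.sin (n * y / 2) ^ 2 * |y| * ((n:ℝ) * |y|)
        = Real.sin (n * y / 2) ^ 2 * |y| ^ 2 := by
      field_simp
    rw [hcancel]
    nlinarith [Real.sin_sq_le_one (n * y / 2), sq_nonneg |y|, sq_nonneg (Real.sin (n * y / 2)),
      mul_nonneg (sq_nonneg (Real.sin (n * y / 2))) (sq_nonneg |y|)]

theorem integral_fejer_mul_abs_le (n : ℕ) (hn : 3 ≤ n) :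
    ∫ y in Set.Ico (-π) π, fejerKernel n y * |y| ≤ 3 * π ^ 2 * Real.log n / n := by
  have hpi := Real.pi_pos
  have hnp : (0 : ℝ) < n := by positivity
  have hn3 : (3 : ℝ) ≤ n := by exact_mod_cast hn
  set a : ℝ := π / n with ha
  have hap : 0 < a := div_pos hpi hnp
  have haπ : a ≤ π := by rw [ha, div_le_iff₀ hnp]; nlinarith
  have hna : (n : ℝ) * a = π := by rw [ha]; field_simp
  -- the three branch functions
  set f₁ : ℝ → ℝ := fun y => π ^ 2 / (n * (-y)) with hf₁
  set f₂ : ℝ → ℝ := fun y => (n : ℝ) * |y| with hf₂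
  set f₃ : ℝ → ℝ := fun y => π ^ 2 / (n * y) with hf₃
  have heq1 : Set.EqOn (fejerBound n) f₁ (Set.Icc (-π) (-a)) := by
    intro y hy
    obtain ⟨hy1, hy2⟩ := hy
    have hyneg : y < 0 := lt_of_le_of_lt hy2 (by linarith)
    have habs : |y| = -y := abs_of_neg hyneg
    rw [fejerBound, ← ha, habs]
    split_ifs with h
    · have hya : -y = a := le_antisymm h (by linarith)
      rw [hf₁]; simp only; rw [hya, hna, sq, mul_div_assoc, div_self Real.pi_ne_zero, mul_one]
    · rfl
  have heq2 : Set.EqOn (fejerBound n) f₂ (Set.Icc (-a) a) := by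
    intro y hy
    rw [fejerBound, ← ha, if_pos (abs_le.2 ⟨hy.1, hy.2⟩)]
  have heq3 : Set.EqOn (fejerBound n) f₃ (Set.Icc a π) := by
    intro y hy
    obtain ⟨hy1, hy2⟩ := hy
    have hypos : 0 < y := lt_of_lt_of_le hap hy1
    have habs : |y| = y := abs_of_pos hypos
    rw [fejerBound, ← ha, habs]
    split_ifs with h
    · have hya : y = a := le_antisymm h hy1
      rw [hf₃]; simp only; rw [hya, hna, sq, mul_div_assoc, div_self Real.pi_ne_zero, mul_one]
    · rfl
  -- integrability
  have hc1 : ContinuousOn f₁ (Set.Icc (-π) (-a)) := by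
    apply ContinuousOn.div continuousOn_const (by fun_prop)
    intro y hy
    have hy0 : y < 0 := lt_of_le_of_lt hy.2 (by linarith)
    exact (mul_pos hnp (by linarith : (0:ℝ) < -y)).ne'
  have hc2 : ContinuousOn f₂ (Set.Icc (-a) a) := by fun_prop
  have hc3 : ContinuousOn f₃ (Set.Icc a π) := by
    apply ContinuousOn.div continuousOn_const (by fun_prop)
    intro y hy
    have : 0 < y := lt_of_lt_of_le hap hy.1
    have : 0 < (n : ℝ) * y := by positivity
    exact this.ne'
  have hInt1 : IntegrableOn (fejerBound n) (Set.Icc (-π) (-a)) :=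
    (hc1.integrableOn_Icc).congr_fun heq1.symm measurableSet_Icc
  have hInt2 : IntegrableOn (fejerBound n) (Set.Icc (-a) a) :=
    (hc2.integrableOn_Icc).congr_fun heq2.symm measurableSet_Icc
  have hInt3 : IntegrableOn (fejerBound n) (Set.Icc a π) :=
    (hc3.integrableOn_Icc).congr_fun heq3.symm measurableSet_Icc
  have hsub : Set.Icc (-π) π ⊆ Set.Icc (-π) (-a) ∪ Set.Icc (-a) a ∪ Set.Icc a π := by
    intro y hy
    rcases le_or_gt y (-a) with h | h
    · exact Or.inl (Or.inl ⟨hy.1, h⟩)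
    rcases le_or_gt y a with h' | h'
    · exact Or.inl (Or.inr ⟨h.le, h'⟩)
    · exact Or.inr ⟨h'.le, hy.2⟩
  have hIntIcc : IntegrableOn (fejerBound n) (Set.Icc (-π) π) :=
    (((hInt1.union hInt2).union hInt3)).mono_set hsub
  have hIntIco : IntegrableOn (fejerBound n) (Set.Ico (-π) π) :=
    hIntIcc.mono_set Set.Ico_subset_Icc_self
  -- step 1: compare
  have step1 : ∫ y in Set.Ico (-π) π, fejerKernel n y * |y| ≤ ∫ y in Set.Ico (-π) π, fejerBound n y := by
    apply integral_mono_of_nonneg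
    · apply Filter.Eventually.of_forall
      intro y
      simp only [Pi.zero_apply, fejerKernel]
      split_ifs with h
      · simp [h]
      · positivity
    · exact hIntIco
    · rw [Filter.EventuallyLE, ae_restrict_iff' measurableSet_Ico]
      exact Filter.Eventually.of_forall fun y hy => fejer_le_bound n hn hy
  -- step 2: compute ∫ fejerBound
  have hii1 : IntervalIntegrable (fejerBound n) volume (-π) (-a) :=
    (intervalIntegrable_iff_integrableOn_Ioc_of_le (by linarith)).2
      (hInt1.mono_set Set.Ioc_subset_Icc_self)
  have hii2 : IntervalIntegrable (fejerBound n) volume (-a) a :=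
    (intervalIntegrable_iff_integrableOn_Ioc_of_le (by linarith)).2
      (hInt2.mono_set Set.Ioc_subset_Icc_self)
  have hii3 : IntervalIntegrable (fejerBound n) volume a π :=
    (intervalIntegrable_iff_integrableOn_Ioc_of_le haπ).2
      (hInt3.mono_set Set.Ioc_subset_Icc_self)
  have hI1 : ∫ y in (-π)..(-a), fejerBound n y = π ^ 2 / n * Real.log n := by
    rw [integral_congr (Set.uIcc_of_le (by linarith : -π ≤ -a) ▸ heq1)]
    have : ∀ y : ℝ, f₁ y = (-(π ^ 2 / n)) * (1 / y) := by
      intro y; rw [hf₁]; simp only; rw [mul_neg, div_neg]; ring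
    simp_rw [this]
    have h0 : (0 : ℝ) ∉ Set.uIcc (-π) (-a) := by
      rw [Set.uIcc_of_le (by linarith : -π ≤ -a), Set.mem_Icc]
      push_neg
      intro _
      linarith
    rw [intervalIntegral.integral_const_mul, integral_one_div h0]
    rw [show (-a) / (-π) = a / π by ring_nf, show a / π = ((n:ℝ))⁻¹ by rw [ha]; field_simp,
      Real.log_inv]
    ring
  have hI3 : ∫ y in a..π, fejerBound n y = π ^ 2 / n * Real.log n := by
    rw [integral_congr (Set.uIcc_of_le haπ ▸ heq3)]
    have : ∀ y : ℝ, f₃ y = (π ^ 2 / n) * (1 / y) := by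
      intro y; rw [hf₃]; simp only; ring
    simp_rw [this]
    have h0 : (0 : ℝ) ∉ Set.uIcc a π := by
      rw [Set.uIcc_of_le haπ, Set.mem_Icc]
      push_neg
      intro h
      linarith
    rw [intervalIntegral.integral_const_mul, integral_one_div h0]
    rw [show π / a = (n : ℝ) by rw [ha]; field_simp]
  have hI2 : ∫ y in (-a)..a, fejerBound n y = π ^ 2 / n := by
    rw [integral_congr (Set.uIcc_of_le (by linarith : -a ≤ a) ▸ heq2)]
    have hiia : IntervalIntegrable f₂ volume (-a) 0 := (by fun_prop : Continuous f₂).intervalIntegrable _ _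
    have hiib : IntervalIntegrable f₂ volume 0 a := (by fun_prop : Continuous f₂).intervalIntegrable _ _
    rw [← integral_add_adjacent_intervals hiia hiib]
    have e1 : ∫ y in (-a)..(0:ℝ), f₂ y = ∫ y in (-a)..(0:ℝ), (-(n:ℝ)) * y := by
      apply integral_congr
      intro y hy
      rw [Set.uIcc_of_le (by linarith : -a ≤ 0)] at hy
      rw [hf₂]; simp only
      rw [abs_of_nonpos hy.2]; ring
    have e2 : ∫ y in (0:ℝ)..a, f₂ y = ∫ y in (0:ℝ)..a, (n:ℝ) * y := by
      apply integral_congr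
      intro y hy
      rw [Set.uIcc_of_le hap.le] at hy
      rw [hf₂]; simp only
      rw [abs_of_nonneg hy.1]
    rw [e1, e2, intervalIntegral.integral_const_mul, intervalIntegral.integral_const_mul,
      integral_id, integral_id]
    have hna2 : (n : ℝ) * a ^ 2 = π ^ 2 / n := by
      rw [ha]; field_simp
    linear_combination hna2
  have step2 : ∫ y in Set.Ico (-π) π, fejerBound n y = π ^ 2 / n * (2 * Real.log n + 1) := by
    rw [show (volume.restrict (Set.Ico (-π) π)) = volume.restrict (Set.Ioc (-π) π) from
      restrict_Ico_eq_restrict_Ioc]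
    rw [← integral_of_le (by linarith : -π ≤ π)]
    rw [← integral_add_adjacent_intervals hii1 (hii2.trans hii3),
      ← integral_add_adjacent_intervals hii2 hii3, hI1, hI2, hI3]
    ring
  -- conclusion
  have hlog : 1 ≤ Real.log n := by
    rw [Real.le_log_iff_exp_le hnp]
    have := Real.exp_one_lt_d9
    linarith
  calc ∫ y in Set.Ico (-π) π, fejerKernel n y * |y| ≤ π ^ 2 / n * (2 * Real.log n + 1) := by
        rw [← step2]; exact step1
    _ ≤ π ^ 2 / n * (3 * Real.log n) := by
        have hnn : (0:ℝ) ≤ π ^ 2 / n := by positivity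
        have : 2 * Real.log n + 1 ≤ 3 * Real.log n := by linarith
        exact mul_le_mul_of_nonneg_left this hnn
    _ = 3 * π ^ 2 * Real.log n / n := by ring
end

section
/- Let Q, R be self-adjoint operators on a finite-dimensional Hilbert space H with 0 < Q < I and 0 < R < I, and let α > 0. Then the Petz-type Rényi quantity of the quasi-free density operators satisfies Tr(ω̂_Q^α ω̂_R^{1-α}) = det[Q^α R^{1-α} + (I-Q)^α (I-R)^{1-α}], where ω̂_Q = det(I-Q)·Γ(Q(I-Q)^{-1}) and similarly for ω̂_R. -/
open scoped ComplexOrder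

/-- Real power of a (positive) matrix via the continuous functional calculus. -/
noncomputable def mrpow {n : Type*} [Fintype n] [DecidableEq n] (x : ℝ) (A : Matrix n n ℂ) :
    Matrix n n ℂ :=
  cfc (fun t : ℝ => t ^ x) A

/-- Logarithm of a (positive) matrix via the continuous functional calculus. -/
noncomputable def mlog {n : Type*} [Fintype n] [DecidableEq n] (A : Matrix n n ℂ) :
    Matrix n n ℂ :=
  cfc Real.log A

/-- Exponential of a (hermitian) matrix via the continuous functional calculus. -/
noncomputable def mexp {n : Type*} [Fintype n] [DecidableEq n] (A : Matrix n n ℂ) :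
    Matrix n n ℂ :=
  cfc Real.exp A

/-- The second quantization `Γ(A) = ⊕_k A^{∧k}` of a matrix `A`, expressed in the
occupation-number basis of the antisymmetric Fock space: its `(S, S')` entry is the minor
`det A[S, S']` when `|S| = |S'|`, and `0` otherwise. -/
noncomputable def gammaOp {ι : Type*} [Fintype ι] [DecidableEq ι] (A : Matrix ι ι ℂ) :
    Matrix (Finset ι) (Finset ι) ℂ :=
  fun S S' =>
    if h : S'.card = S.card then
      (A.submatrix (fun i : Fin S.card => (S.equivFin.symm i : ι))
        (fun i : Fin S.card => (S'.equivFin.symm (Fin.cast h.symm i) : ι))).det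
    else 0

/-- The quasi-free density operator `ω̂_Q = det(I-Q)·Γ(Q(I-Q)⁻¹)`. -/
noncomputable def qfDensity {ι : Type*} [Fintype ι] [DecidableEq ι] (Q : Matrix ι ι ℂ) :
    Matrix (Finset ι) (Finset ι) ℂ :=
  (1 - Q).det • gammaOp (Q * (1 - Q)⁻¹)


section Aux
open Matrix Finset Polynomial
variable {ι : Type*} [Fintype ι] [DecidableEq ι]


noncomputable def emb (S : Finset ι) : Fin S.card → ι := fun i => (S.equivFin.symm i : ι)

lemma emb_injective (S : Finset ι) : Function.Injective (emb S) := by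
  intro i j hij
  simpa [emb] using congrArg S.equivFin (Subtype.ext hij)

lemma emb_mem (S : Finset ι) (i : Fin S.card) : emb S i ∈ S := (S.equivFin.symm i).2

lemma gammaOp_apply (A : Matrix ι ι ℂ) (S S' : Finset ι) :
    gammaOp A S S' = if h : S'.card = S.card then
      (A.submatrix (emb S) (fun i : Fin S.card => emb S' (Fin.cast h.symm i))).det
    else 0 := rfl

lemma gammaOp_diagonal (v : ι → ℂ) :
    gammaOp (diagonal v) = diagonal (fun S : Finset ι => ∏ i ∈ S, v i) := by
  ext S S'
  rw [gammaOp_apply]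
  by_cases h : S'.card = S.card
  · rw [dif_pos h]
    by_cases hSS : S = S'
    · subst hSS
      have hcast : (fun i : Fin S.card => emb S (Fin.cast h.symm i)) = emb S := by
        funext i; rfl
      rw [hcast]
      have hsub : (diagonal v).submatrix (emb S) (emb S) = diagonal (v ∘ emb S) := by
        ext i j
        rcases eq_or_ne i j with rfl | hne
        · simp
        · rw [Matrix.submatrix_apply, Matrix.diagonal_apply_ne _
            (fun hc => hne (emb_injective S hc)), Matrix.diagonal_apply_ne _ hne]
      rw [hsub, det_diagonal, Matrix.diagonal_apply_eq]
      exact Finset.prod_bij' (fun x _ => emb S x) (fun y hy => S.equivFin ⟨y, hy⟩)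
        (fun x _ => emb_mem S _) (fun y hy => mem_univ _)
        (by intro x _; simp [emb]) (by intro y hy; simp [emb]) (fun x _ => rfl)
    · obtain ⟨x, hxS, hxS'⟩ : ∃ x ∈ S, x ∉ S' := by
        by_contra hc
        push_neg at hc
        exact hSS (Finset.eq_of_subset_of_card_le hc (le_of_eq h))
      rw [Matrix.diagonal_apply_ne _ hSS]
      refine Matrix.det_eq_zero_of_row_eq_zero (S.equivFin ⟨x, hxS⟩) fun j => ?_
      rw [Matrix.submatrix_apply]
      have hrow : emb S (S.equivFin ⟨x, hxS⟩) = x := by simp [emb]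
      rw [hrow]
      exact Matrix.diagonal_apply_ne' _ fun hc => hxS' (hc ▸ emb_mem S' _)
  · rw [dif_neg h]
    exact (Matrix.diagonal_apply_ne _ (fun hc : S = S' => h (by rw [hc]))).symm

lemma gammaOp_one : gammaOp (1 : Matrix ι ι ℂ) = 1 := by
  rw [← Matrix.diagonal_one, gammaOp_diagonal]
  simp

lemma gammaOp_conjTranspose (A : Matrix ι ι ℂ) : gammaOp Aᴴ = (gammaOp A)ᴴ := by
  ext S S'
  rw [Matrix.conjTranspose_apply, gammaOp_apply, gammaOp_apply]
  by_cases h : S'.card = S.card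
  · rw [dif_pos h, dif_pos h.symm]
    have h1 : Aᴴ.submatrix (emb S) (fun i : Fin S.card => emb S' (Fin.cast h.symm i))
        = (A.submatrix (fun i : Fin S.card => emb S' (Fin.cast h.symm i)) (emb S))ᴴ := by
      rw [← Matrix.conjTranspose_submatrix]
    rw [h1, Matrix.det_conjTranspose]
    congr 1
    have h2 : A.submatrix (fun i : Fin S.card => emb S' (Fin.cast h.symm i)) (emb S)
        = (A.submatrix (emb S') (fun i : Fin S'.card => emb S (Fin.cast h i))).submatrix
            (finCongr h.symm) (finCongr h.symm) := rfl
    rw [h2, Matrix.det_submatrix_equiv_self]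
  · rw [dif_neg h, dif_neg (fun hc => h hc.symm), star_zero]

lemma expand_det {k : ℕ} (M : Matrix (Fin k) ι ℂ) (N : Matrix ι (Fin k) ℂ) (s : Finset ι) :
    (Matrix.of fun i j => ∑ x ∈ s, M i x * N x j).det
      = ∑ p ∈ Fintype.piFinset (fun _ : Fin k => s),
          (∏ i, M i (p i)) * (N.submatrix p id).det := by
  have h1 : (Matrix.of fun i j => ∑ x ∈ s, M i x * N x j).det
      = (Matrix.detRowAlternating (R := ℂ) (n := Fin k)).toMultilinearMap (fun i => ∑ x ∈ s, M i x • N x) := by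
    congr 1
    ext i j
    simp [Finset.sum_apply]
  rw [h1,
    (Matrix.detRowAlternating (R := ℂ) (n := Fin k)).toMultilinearMap.map_sum_finset
    (g := fun i x => M i x • N x) (A := fun _ => s)]
  refine Finset.sum_congr rfl fun p _ => ?_
  rw [(Matrix.detRowAlternating (R := ℂ) (n := Fin k)).toMultilinearMap.map_smul_univ
    (fun i => M i (p i)) (fun i => N (p i))]
  rfl

theorem cauchyBinet {k : ℕ} (M : Matrix (Fin k) ι ℂ) (N : Matrix ι (Fin k) ℂ) :
    (M * N).det = ∑ T : Finset ι, (if h : T.card = k then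
        (M.submatrix id (fun i => emb T (Fin.cast h.symm i))).det *
        (N.submatrix (fun i => emb T (Fin.cast h.symm i)) id).det else 0) := by
  classical
  set G : (Fin k → ι) → ℂ := fun p => (∏ i, M i (p i)) * (N.submatrix p id).det with hG
  have hL : (M * N).det = ∑ p : Fin k → ι, G p := by
    have h1 : M * N = Matrix.of fun i j => ∑ x ∈ univ, M i x * N x j := by
      ext i j; simp [Matrix.mul_apply]
    rw [h1, expand_det]
    rw [Fintype.piFinset_univ]
  have hzero : ∀ p : Fin k → ι, ¬ Function.Injective p → G p = 0 := by
    intro p hp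
    rw [Function.Injective] at hp
    push_neg at hp
    obtain ⟨i, j, hij, hne⟩ := hp
    have h2 : (N.submatrix p id).det = 0 :=
      Matrix.det_zero_of_row_eq hne (by funext t; simp [Matrix.submatrix_apply, hij])
    simp [hG, h2]
  have hT : ∀ T : Finset ι, ∀ h : T.card = k,
      (M.submatrix id (fun i => emb T (Fin.cast h.symm i))).det *
        (N.submatrix (fun i => emb T (Fin.cast h.symm i)) id).det
      = ∑ p : Fin k → ι, (if p ∈ Fintype.piFinset (fun _ : Fin k => T) then G p else 0) := by
    intro T h
    rw [← Matrix.det_mul]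
    have h2 : (M.submatrix id (fun i => emb T (Fin.cast h.symm i))) *
        (N.submatrix (fun i => emb T (Fin.cast h.symm i)) id)
        = Matrix.of fun i j => ∑ x ∈ T, M i x * N x j := by
      ext i j
      rw [Matrix.mul_apply]
      refine Finset.sum_bij' (fun x _ => emb T (Fin.cast h.symm x))
        (fun y hy => Fin.cast h (T.equivFin ⟨y, hy⟩)) (fun x _ => emb_mem T _)
        (fun y hy => mem_univ _) ?_ ?_ ?_
      · intro x _
        simp [emb]
      · intro y hy
        simp [emb]
      · intro x _
        rfl
    rw [h2, expand_det]
    rw [show (∑ p : Fin k → ι, (if p ∈ Fintype.piFinset (fun _ : Fin k => T) then G p else 0))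
        = ∑ p ∈ Fintype.piFinset (fun _ : Fin k => T), G p from
      Finset.sum_ite_mem univ _ _ |>.trans (by rw [Finset.univ_inter])]
  have key : ∀ p : Fin k → ι, ∑ T ∈ univ.filter (fun T : Finset ι => T.card = k),
      (if p ∈ Fintype.piFinset (fun _ : Fin k => T) then G p else 0) = G p := by
    intro p
    by_cases hp : Function.Injective p
    · have himg : (Finset.image p univ).card = k := by
        rw [Finset.card_image_of_injective _ hp, card_univ, Fintype.card_fin]
      have hcong : ∀ T ∈ univ.filter (fun T : Finset ι => T.card = k),
          (if p ∈ Fintype.piFinset (fun _ : Fin k => T) then G p else 0)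
            = (if T = Finset.image p univ then G p else 0) := by
        intro T hT
        simp only [mem_filter, mem_univ, true_and] at hT
        refine if_congr ?_ rfl rfl
        constructor
        · intro hmem
          have hsub : Finset.image p univ ⊆ T := by
            intro y hy
            obtain ⟨i, _, rfl⟩ := Finset.mem_image.mp hy
            exact Fintype.mem_piFinset.mp hmem i
          exact (Finset.eq_of_subset_of_card_le hsub (by rw [hT, himg])).symm
        · rintro rfl
          exact Fintype.mem_piFinset.mpr fun i => Finset.mem_image_of_mem p (mem_univ i)
      rw [Finset.sum_congr rfl hcong, Finset.sum_ite_eq' _ _ (fun _ => G p)]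
      exact if_pos (mem_filter.mpr ⟨mem_univ (Finset.image p univ), himg⟩)
    · simp [hzero p hp]
  calc (M * N).det = ∑ p : Fin k → ι, G p := hL
    _ = ∑ p : Fin k → ι, ∑ T ∈ univ.filter (fun T : Finset ι => T.card = k),
          (if p ∈ Fintype.piFinset (fun _ : Fin k => T) then G p else 0) :=
      Finset.sum_congr rfl fun p _ => (key p).symm
    _ = ∑ T ∈ univ.filter (fun T : Finset ι => T.card = k),
          ∑ p : Fin k → ι, (if p ∈ Fintype.piFinset (fun _ : Fin k => T) then G p else 0) :=
      Finset.sum_comm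
    _ = ∑ T ∈ univ.filter (fun T : Finset ι => T.card = k), (if h : T.card = k then
        (M.submatrix id (fun i => emb T (Fin.cast h.symm i))).det *
        (N.submatrix (fun i => emb T (Fin.cast h.symm i)) id).det else 0) := by
      refine Finset.sum_congr rfl fun T hTm => ?_
      have hc : T.card = k := (mem_filter.mp hTm).2
      rw [dif_pos hc, hT T hc]
    _ = ∑ T : Finset ι, (if h : T.card = k then
        (M.submatrix id (fun i => emb T (Fin.cast h.symm i))).det *
        (N.submatrix (fun i => emb T (Fin.cast h.symm i)) id).det else 0) := by
      refine Finset.sum_subset (filter_subset _ _) fun T _ hTn => ?_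
      rw [dif_neg]
      intro hc
      exact hTn (mem_filter.mpr ⟨mem_univ _, hc⟩)

lemma gammaOp_mul (M N : Matrix ι ι ℂ) : gammaOp (M * N) = gammaOp M * gammaOp N := by
  ext S S'
  rw [Matrix.mul_apply, gammaOp_apply]
  by_cases h : S'.card = S.card
  · rw [dif_pos h]
    have h1 : (M * N).submatrix (emb S) (fun i : Fin S.card => emb S' (Fin.cast h.symm i))
        = (M.submatrix (emb S) id) * (N.submatrix id (fun i : Fin S.card => emb S' (Fin.cast h.symm i))) :=
      Matrix.submatrix_mul M N _ _ _ Function.bijective_id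
    rw [h1, cauchyBinet]
    refine Finset.sum_congr rfl fun T _ => ?_
    rw [gammaOp_apply, gammaOp_apply]
    by_cases h' : T.card = S.card
    · rw [dif_pos h', dif_pos h', dif_pos (h.trans h'.symm)]
      congr 1
      have h2 : (N.submatrix id (fun i : Fin S.card => emb S' (Fin.cast h.symm i))).submatrix
            (fun i : Fin S.card => emb T (Fin.cast h'.symm i)) id
            = (N.submatrix (emb T) (fun i : Fin T.card =>
                emb S' (Fin.cast (h.trans h'.symm).symm i))).submatrix
              (finCongr h'.symm) (finCongr h'.symm) := rfl
      rw [h2, Matrix.det_submatrix_equiv_self]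
    · rw [dif_neg h', dif_neg h', zero_mul]
  · rw [dif_neg h]
    symm
    refine Finset.sum_eq_zero fun T _ => ?_
    rw [gammaOp_apply, gammaOp_apply]
    by_cases h' : T.card = S.card
    · rw [dif_neg (fun hc : S'.card = T.card => h (hc.trans h')), mul_zero]
    · rw [dif_neg h', zero_mul]


/-- Conjugation by a unitary as an `ℝ`-algebra homomorphism. -/
noncomputable def conjAlgHom (W : Matrix ι ι ℂ) (hW : W ∈ unitary (Matrix ι ι ℂ)) :
    Matrix ι ι ℂ →ₐ[ℝ] Matrix ι ι ℂ where
  toFun X := W * X * Wᴴ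
  map_one' := by
    show W * 1 * Wᴴ = 1
    rw [mul_one, ← Matrix.star_eq_conjTranspose]
    exact (Unitary.mem_iff.mp hW).2
  map_mul' X Y := by
    have h1 : Wᴴ * W = 1 := by
      rw [← Matrix.star_eq_conjTranspose]; exact (Unitary.mem_iff.mp hW).1
    calc W * (X * Y) * Wᴴ = W * X * (Wᴴ * W) * Y * Wᴴ := by rw [h1]; noncomm_ring
      _ = W * X * Wᴴ * (W * Y * Wᴴ) := by noncomm_ring
  map_zero' := by simp
  map_add' X Y := by noncomm_ring
  commutes' r := by
    have h2 : W * Wᴴ = 1 := by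
      rw [← Matrix.star_eq_conjTranspose]; exact (Unitary.mem_iff.mp hW).2
    show W * (algebraMap ℝ (Matrix ι ι ℂ) r) * Wᴴ = algebraMap ℝ (Matrix ι ι ℂ) r
    rw [Algebra.algebraMap_eq_smul_one, Matrix.mul_smul, mul_one, Matrix.smul_mul, h2]

lemma cfc_conj_diagonal (W : Matrix ι ι ℂ) (hW : W ∈ unitary (Matrix ι ι ℂ))
    (e : ι → ℝ) (f : ℝ → ℝ) :
    cfc f (W * diagonal (fun i => (e i : ℂ)) * Wᴴ)
      = W * diagonal (fun i => (f (e i) : ℂ)) * Wᴴ := by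
  have h1 : Wᴴ * W = 1 := by
    rw [← Matrix.star_eq_conjTranspose]; exact (Unitary.mem_iff.mp hW).1
  have h2 : W * Wᴴ = 1 := by
    rw [← Matrix.star_eq_conjTranspose]; exact (Unitary.mem_iff.mp hW).2
  set A := W * diagonal (fun i => (e i : ℂ)) * Wᴴ with hA
  have hsa : _root_.IsSelfAdjoint A := by
    show Aᴴ = A
    rw [hA, Matrix.conjTranspose_mul, Matrix.conjTranspose_mul, conjTranspose_conjTranspose,
      diagonal_conjTranspose]
    have : (star fun i => (e i : ℂ)) = fun i => (e i : ℂ) := by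
      funext i; simp [Pi.star_apply, Complex.conj_ofReal]
    rw [this, ← mul_assoc]
  -- spectrum
  have hu : spectrum ℂ A = spectrum ℂ (diagonal (fun i => (e i : ℂ))) := by
    have h3 : A = (⟨W, hW⟩ : unitary (Matrix ι ι ℂ)) * diagonal (fun i => (e i : ℂ))
        * (star (⟨W, hW⟩ : unitary (Matrix ι ι ℂ)) : Matrix ι ι ℂ) := by
      rw [hA, Matrix.star_eq_conjTranspose]
    rw [h3, Unitary.spectrum_star_right_conjugate]
  have hspec : spectrum ℝ A ⊆ Set.range e := by
    intro x hx
    have h4 : (algebraMap ℝ ℂ) x ∈ spectrum ℂ A := spectrum.algebraMap_mem ℂ hx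
    rw [hu, spectrum_diagonal] at h4
    obtain ⟨i, hi⟩ := h4
    exact ⟨i, Complex.ofReal_injective (by simpa using hi)⟩
  -- interpolating polynomial
  set s : Finset ℝ := Finset.image e Finset.univ with hs
  set p : ℝ[X] := Lagrange.interpolate s id f with hp
  have hpf : ∀ x ∈ Set.range e, p.eval x = f x := by
    rintro x ⟨i, rfl⟩
    have : e i ∈ s := Finset.mem_image_of_mem e (mem_univ i)
    exact Lagrange.eval_interpolate_at_node f (Set.injOn_id _) this
  have step1 : cfc f A = cfc (fun x => p.eval x) A :=
    cfc_congr fun x hx => (hpf x (hspec hx)).symm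
  have step2 : cfc (fun x => p.eval x) A = aeval A p := cfc_polynomial p A hsa
  -- aeval computation
  have step3 : aeval A p = W * diagonal (fun i => ((p.eval (e i) : ℝ) : ℂ)) * Wᴴ := by
    have hAeq : A = conjAlgHom W hW (diagonal (fun i => (e i : ℂ))) := rfl
    rw [hAeq, aeval_algHom_apply]
    have hdiag : diagonal (fun i => (e i : ℂ))
        = Matrix.diagonalAlgHom (n := ι) (α := ℂ) ℝ (fun i => (e i : ℂ)) := rfl
    rw [hdiag, aeval_algHom_apply]
    have hpi : aeval (fun i => (e i : ℂ)) p = fun i => ((p.eval (e i) : ℝ) : ℂ) := by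
      funext i
      have h5 : (aeval (fun i => (e i : ℂ)) p) i
          = aeval ((fun i => (e i : ℂ)) i) p :=
        (aeval_algHom_apply (Pi.evalAlgHom ℝ (fun _ : ι => ℂ) i) _ p).symm
      rw [h5]
      have h6 : aeval ((e i : ℂ)) p = Complex.ofRealAm (aeval (e i) p) :=
        aeval_algHom_apply Complex.ofRealAm (e i) p
      rw [h6]
      simp [Polynomial.coe_aeval_eq_eval]
    rw [hpi]
    rfl
  rw [step1, step2, step3]
  have hfin : (fun i => ((p.eval (e i) : ℝ) : ℂ)) = fun i => ((f (e i) : ℝ) : ℂ) := by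
    funext i; rw [hpf (e i) ⟨i, rfl⟩]
  rw [hfin]


lemma conj_mul_conj (W A B : Matrix ι ι ℂ) (h1 : Wᴴ * W = 1) :
    (W * A * Wᴴ) * (W * B * Wᴴ) = W * (A * B) * Wᴴ := by
  have h : (W * A * Wᴴ) * (W * B * Wᴴ) = W * A * (Wᴴ * W) * (B * Wᴴ) := by noncomm_ring
  rw [h, h1, mul_one]
  noncomm_ring

lemma conj_diag_mul (W : Matrix ι ι ℂ) (h1 : Wᴴ * W = 1) (v w : ι → ℂ) :
    (W * diagonal v * Wᴴ) * (W * diagonal w * Wᴴ) = W * diagonal (fun i => v i * w i) * Wᴴ := by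
  rw [conj_mul_conj W _ _ h1, diagonal_mul_diagonal]

lemma det_conj' (W A : Matrix ι ι ℂ) (h1 : Wᴴ * W = 1) : (W * A * Wᴴ).det = A.det := by
  rw [Matrix.det_mul_comm, ← mul_assoc, h1, one_mul]

lemma conj_diag_isHermitian (W : Matrix ι ι ℂ) (v : ι → ℝ) :
    (W * diagonal (fun i => (v i : ℂ)) * Wᴴ).IsHermitian := by
  show _ = _
  rw [Matrix.conjTranspose_mul, Matrix.conjTranspose_mul, conjTranspose_conjTranspose,
    diagonal_conjTranspose]
  have h : (star fun i => (v i : ℂ)) = fun i => (v i : ℂ) := by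
    funext i; simp [Pi.star_apply, Complex.conj_ofReal]
  rw [h, ← mul_assoc]

end Aux

section Aux2
open Matrix Finset Polynomial
variable {ι : Type*} [Fintype ι] [DecidableEq ι]

lemma gammaOp_unitary {W : Matrix ι ι ℂ} (hW : W ∈ unitary (Matrix ι ι ℂ)) :
    gammaOp W ∈ unitary (Matrix (Finset ι) (Finset ι) ℂ) := by
  have h1 : Wᴴ * W = 1 := by
    rw [← Matrix.star_eq_conjTranspose]; exact (Unitary.mem_iff.mp hW).1
  have h2 : W * Wᴴ = 1 := by
    rw [← Matrix.star_eq_conjTranspose]; exact (Unitary.mem_iff.mp hW).2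
  rw [Unitary.mem_iff]
  constructor
  · rw [Matrix.star_eq_conjTranspose, ← gammaOp_conjTranspose, ← gammaOp_mul, h1, gammaOp_one]
  · rw [Matrix.star_eq_conjTranspose, ← gammaOp_conjTranspose, ← gammaOp_mul, h2, gammaOp_one]

lemma gammaOp_conj_diagonal (W : Matrix ι ι ℂ) (v : ι → ℂ) :
    gammaOp (W * diagonal v * Wᴴ)
      = gammaOp W * diagonal (fun S : Finset ι => ∏ i ∈ S, v i) * (gammaOp W)ᴴ := by
  rw [gammaOp_mul, gammaOp_mul, gammaOp_diagonal, gammaOp_conjTranspose]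

lemma trace_gammaOp_diagonal (v : ι → ℂ) :
    (gammaOp (diagonal v)).trace = ∏ i, (1 + v i) := by
  rw [gammaOp_diagonal, Matrix.trace_diagonal]
  have h := Finset.prod_add v (fun _ => (1 : ℂ)) univ
  simp only [prod_const_one, mul_one, Finset.powerset_univ] at h
  calc ∑ S : Finset ι, ∏ i ∈ S, v i = ∏ i, (v i + 1) := h.symm
    _ = ∏ i, (1 + v i) := by simp [add_comm]

lemma trace_gammaOp_mul_eq_det (A B A2 : Matrix ι ι ℂ)
    (hA2 : A2 * A2 = A) (hA2h : A2ᴴ = A2) (hBh : Bᴴ = B) :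
    (gammaOp (A * B)).trace = (1 + A * B).det := by
  have hG : (A2 * B * A2).IsHermitian := by
    show _ = _
    rw [Matrix.conjTranspose_mul, Matrix.conjTranspose_mul, hA2h, hBh, mul_assoc]
  set W : Matrix ι ι ℂ := (hG.eigenvectorUnitary : Matrix ι ι ℂ) with hW
  set w : ι → ℝ := hG.eigenvalues with hw
  have hWu : W ∈ unitary (Matrix ι ι ℂ) := hG.eigenvectorUnitary.2
  have h1 : Wᴴ * W = 1 := by
    rw [← Matrix.star_eq_conjTranspose]; exact (Unitary.mem_iff.mp hWu).1
  have hsp : A2 * B * A2 = W * diagonal (fun i => ((w i : ℝ) : ℂ)) * Wᴴ := hG.spectral_theorem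
  -- move trace to G
  have step1 : (gammaOp (A * B)).trace = (gammaOp (A2 * B * A2)).trace := by
    have hAB : A * B = A2 * (A2 * B) := by rw [← hA2, mul_assoc]
    rw [hAB, gammaOp_mul, Matrix.trace_mul_comm, ← gammaOp_mul]
  -- compute trace of gammaOp of G
  have step2 : (gammaOp (A2 * B * A2)).trace = ∏ i, (1 + ((w i : ℝ) : ℂ)) := by
    rw [hsp, gammaOp_conj_diagonal, Matrix.trace_mul_comm, ← mul_assoc, ← gammaOp_conjTranspose,
      ← gammaOp_mul, h1, gammaOp_one, one_mul, ← gammaOp_diagonal, trace_gammaOp_diagonal]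
  -- compute det
  have step3 : (1 + A * B).det = ∏ i, (1 + ((w i : ℝ) : ℂ)) := by
    have hd1 : (1 + A * B).det = (1 + A2 * B * A2).det := by
      have e1 : A * B = A2 * (A2 * B) := by rw [← hA2, mul_assoc]
      have e2 : A2 * B * A2 = (A2 * B) * A2 := by rw [mul_assoc]
      rw [e1, e2, Matrix.det_one_add_mul_comm]
    have hone : (1 : Matrix ι ι ℂ) = W * diagonal (fun _ : ι => (1 : ℂ)) * Wᴴ := by
      rw [Matrix.diagonal_one, mul_one, ← Matrix.star_eq_conjTranspose]
      exact ((Unitary.mem_iff.mp hWu).2).symm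
    have hd2 : (1 : Matrix ι ι ℂ) + A2 * B * A2
        = W * diagonal (fun i => 1 + ((w i : ℝ) : ℂ)) * Wᴴ := by
      rw [hsp]
      calc (1 : Matrix ι ι ℂ) + W * diagonal (fun i => ((w i : ℝ) : ℂ)) * Wᴴ
          = W * diagonal (fun _ : ι => (1 : ℂ)) * Wᴴ
            + W * diagonal (fun i => ((w i : ℝ) : ℂ)) * Wᴴ := by rw [← hone]
        _ = W * (diagonal (fun _ : ι => (1 : ℂ)) + diagonal (fun i => ((w i : ℝ) : ℂ))) * Wᴴ := by
            noncomm_ring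
        _ = W * diagonal (fun i => 1 + ((w i : ℝ) : ℂ)) * Wᴴ := by rw [diagonal_add]
    rw [hd1, hd2, det_conj' _ _ h1, det_diagonal]
  rw [step1, step2, step3]
end Aux2

section Aux3
open Matrix Finset Polynomial
open scoped ComplexOrder
variable {ι : Type*} [Fintype ι] [DecidableEq ι]

lemma smul_conj (c : ℂ) (P D R : Matrix ι ι ℂ) : c • (P * D * R) = P * (c • D) * R := by
  rw [mul_smul_comm, smul_mul_assoc]

lemma qf_package (X : Matrix ι ι ℂ) (hX : X.PosDef) (hX' : (1 - X).PosDef) (x : ℝ) :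
    ∃ (W : Matrix ι ι ℂ) (_ : W ∈ unitary (Matrix ι ι ℂ)) (μ : ι → ℝ),
      (∀ i, 0 < μ i) ∧ (∀ i, 0 < 1 - μ i) ∧
      mrpow x X = W * diagonal (fun i => ((μ i ^ x : ℝ) : ℂ)) * Wᴴ ∧
      mrpow x (1 - X) = W * diagonal (fun i => (((1 - μ i) ^ x : ℝ) : ℂ)) * Wᴴ ∧
      mrpow x (qfDensity X) = ((((∏ i, (1 - μ i)) ^ x : ℝ)) : ℂ) •
        gammaOp (W * diagonal (fun i => (((μ i * (1 - μ i)⁻¹) ^ x : ℝ) : ℂ)) * Wᴴ) := by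
  have hXh : X.IsHermitian := hX.1
  set W : Matrix ι ι ℂ := (hXh.eigenvectorUnitary : Matrix ι ι ℂ) with hWdef
  set μ : ι → ℝ := hXh.eigenvalues with hμdef
  have hW : W ∈ unitary (Matrix ι ι ℂ) := hXh.eigenvectorUnitary.2
  have h1 : Wᴴ * W = 1 := by
    rw [← Matrix.star_eq_conjTranspose]; exact (Unitary.mem_iff.mp hW).1
  have h2 : W * Wᴴ = 1 := by
    rw [← Matrix.star_eq_conjTranspose]; exact (Unitary.mem_iff.mp hW).2
  have hXeq : X = W * diagonal (fun i => ((μ i : ℝ) : ℂ)) * Wᴴ := hXh.spectral_theorem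
  have hμpos : ∀ i, 0 < μ i := hX.eigenvalues_pos
  have hone : (1 : Matrix ι ι ℂ) = W * diagonal (fun _ : ι => (1 : ℂ)) * Wᴴ := by
    rw [Matrix.diagonal_one, mul_one, h2]
  have h1X : 1 - X = W * diagonal (fun i => ((1 - μ i : ℝ) : ℂ)) * Wᴴ := by
    calc 1 - X = W * diagonal (fun _ : ι => (1 : ℂ)) * Wᴴ
          - W * diagonal (fun i => ((μ i : ℝ) : ℂ)) * Wᴴ := by rw [← hone, ← hXeq]
      _ = W * (diagonal (fun _ : ι => (1 : ℂ)) - diagonal (fun i => ((μ i : ℝ) : ℂ))) * Wᴴ := by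
          noncomm_ring
      _ = W * diagonal (fun i => ((1 - μ i : ℝ) : ℂ)) * Wᴴ := by
          rw [diagonal_sub]
          congr 2
          funext i
          push_cast
          ring
  have hμlt : ∀ i, 0 < 1 - μ i := by
    have hsd : (Wᴴ * (1 - X) * W).PosSemidef := hX'.posSemidef.conjTranspose_mul_mul_same W
    have hdg : Wᴴ * (1 - X) * W = diagonal (fun i => ((1 - μ i : ℝ) : ℂ)) := by
      rw [h1X]
      calc Wᴴ * (W * diagonal (fun i => ((1 - μ i : ℝ) : ℂ)) * Wᴴ) * W
          = (Wᴴ * W) * diagonal (fun i => ((1 - μ i : ℝ) : ℂ)) * (Wᴴ * W) := by noncomm_ring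
        _ = _ := by rw [h1, one_mul, mul_one]
    rw [hdg] at hsd
    have hge : ∀ i, 0 ≤ 1 - μ i := fun i =>
      Complex.zero_le_real.mp (Matrix.posSemidef_diagonal_iff.mp hsd i)
    have hdet : (1 - X).det = ∏ i, ((1 - μ i : ℝ) : ℂ) := by
      rw [h1X, det_conj' _ _ h1, det_diagonal]
    have hne : ∀ i, ((1 - μ i : ℝ) : ℂ) ≠ 0 := by
      have := hX'.det_pos.ne'
      rw [hdet] at this
      exact fun i => Finset.prod_ne_zero_iff.mp this i (mem_univ i)
    intro i
    rcases lt_or_eq_of_le (hge i) with h | h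
    · exact h
    · exact absurd (by rw [← h]; norm_num) (hne i)
  have hdetc : (1 - X).det = (((∏ i, (1 - μ i)) : ℝ) : ℂ) := by
    rw [h1X, det_conj' _ _ h1, det_diagonal]
    push_cast
    rfl
  have hXinv : (1 - X)⁻¹ = W * diagonal (fun i => (((1 - μ i)⁻¹ : ℝ) : ℂ)) * Wᴴ := by
    apply Matrix.inv_eq_right_inv
    rw [h1X, conj_diag_mul W h1]
    have : (fun i => ((1 - μ i : ℝ) : ℂ) * (((1 - μ i)⁻¹ : ℝ) : ℂ)) = fun _ : ι => (1 : ℂ) := by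
      funext i
      rw [← Complex.ofReal_mul, mul_inv_cancel₀ (hμlt i).ne']
      norm_num
    rw [this, Matrix.diagonal_one, mul_one, h2]
  have hT : X * (1 - X)⁻¹ = W * diagonal (fun i => ((μ i * (1 - μ i)⁻¹ : ℝ) : ℂ)) * Wᴴ := by
    rw [hXinv]
    conv_lhs => rw [hXeq]
    rw [conj_diag_mul W h1]
    congr 2
    funext i
    push_cast
    ring
  refine ⟨W, hW, μ, hμpos, hμlt, ?_, ?_, ?_⟩
  · show cfc (fun t : ℝ => t ^ x) X = _
    rw [hXeq]
    exact cfc_conj_diagonal W hW μ (fun t => t ^ x)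
  · show cfc (fun t : ℝ => t ^ x) (1 - X) = _
    rw [h1X]
    exact cfc_conj_diagonal W hW (fun i => 1 - μ i) (fun t => t ^ x)
  · have hqf : qfDensity X = gammaOp W * diagonal (fun S : Finset ι =>
        ((((∏ i, (1 - μ i)) * ∏ i ∈ S, (μ i * (1 - μ i)⁻¹)) : ℝ) : ℂ)) * (gammaOp W)ᴴ := by
      show (1 - X).det • gammaOp (X * (1 - X)⁻¹) = _
      rw [hT, gammaOp_conj_diagonal, hdetc, smul_conj, ← Matrix.diagonal_smul]
      have harg : ((((∏ i, (1 - μ i)) : ℝ) : ℂ)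
            • fun S : Finset ι => ∏ i ∈ S, ((μ i * (1 - μ i)⁻¹ : ℝ) : ℂ))
          = fun S : Finset ι =>
              ((((∏ i, (1 - μ i)) * ∏ i ∈ S, (μ i * (1 - μ i)⁻¹)) : ℝ) : ℂ) := by
        funext S
        rw [Pi.smul_apply, smul_eq_mul]
        push_cast
        ring
      rw [harg]
    show cfc (fun t : ℝ => t ^ x) (qfDensity X) = _
    rw [hqf]
    rw [cfc_conj_diagonal (gammaOp W) (gammaOp_unitary hW)
      (fun S : Finset ι => (∏ i, (1 - μ i)) * ∏ i ∈ S, (μ i * (1 - μ i)⁻¹)) (fun t => t ^ x)]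
    rw [gammaOp_conj_diagonal, smul_conj, ← Matrix.diagonal_smul]
    have harg : (fun S : Finset ι =>
          (((((∏ i, (1 - μ i)) * ∏ i ∈ S, (μ i * (1 - μ i)⁻¹)) ^ x : ℝ)) : ℂ))
        = (((((∏ i, (1 - μ i)) ^ x : ℝ)) : ℂ)
            • fun S : Finset ι => ∏ i ∈ S, (((μ i * (1 - μ i)⁻¹) ^ x : ℝ) : ℂ)) := by
      funext S
      rw [Pi.smul_apply, smul_eq_mul, ← Complex.ofReal_prod, ← Complex.ofReal_mul]
      congr 1
      rw [Real.mul_rpow (Finset.prod_nonneg fun i _ => (hμlt i).le)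
      (Finset.prod_nonneg fun i _ => (mul_nonneg (hμpos i).le (inv_nonneg.mpr (hμlt i).le))),
      ← Real.finset_prod_rpow S _ (fun i _ => mul_nonneg (hμpos i).le (inv_nonneg.mpr (hμlt i).le))]
    rw [harg]
end Aux3

/-- Petz-type Rényi quantity of two quasi-free density operators:
`Tr(ω̂_Q^α ω̂_R^{1-α}) = det[Q^α R^{1-α} + (I-Q)^α (I-R)^{1-α}]`. -/
theorem trace_qf_petz {d : ℕ} (Q R : Matrix (Fin d) (Fin d) ℂ)
    (hQ : Q.PosDef) (hQ' : (1 - Q).PosDef) (hR : R.PosDef) (hR' : (1 - R).PosDef)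
    (α : ℝ) (hα : 0 < α) :
    (mrpow α (qfDensity Q) * mrpow (1 - α) (qfDensity R)).trace
      = (mrpow α Q * mrpow (1 - α) R + mrpow α (1 - Q) * mrpow (1 - α) (1 - R)).det := by
  classical
  open Matrix Finset in
  obtain ⟨U, hU, μ, hμpos, hμlt, hP1, hP2, hQf⟩ := qf_package Q hQ hQ' α
  obtain ⟨V, hV, ν, hνpos, hνlt, hS1, hS2, hRf⟩ := qf_package R hR hR' (1 - α)
  have h1U : Uᴴ * U = 1 := by
    rw [← Matrix.star_eq_conjTranspose]; exact (Unitary.mem_iff.mp hU).1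
  have h1V : Vᴴ * V = 1 := by
    rw [← Matrix.star_eq_conjTranspose]; exact (Unitary.mem_iff.mp hV).1
  set r : Fin d → ℝ := fun i => μ i * (1 - μ i)⁻¹ with hr
  set s : Fin d → ℝ := fun i => ν i * (1 - ν i)⁻¹ with hs
  have hrpos : ∀ i, 0 ≤ r i := fun i => mul_nonneg (hμpos i).le (inv_nonneg.mpr (hμlt i).le)
  have hspos : ∀ i, 0 ≤ s i := fun i => mul_nonneg (hνpos i).le (inv_nonneg.mpr (hνlt i).le)
  set AQ : Matrix (Fin d) (Fin d) ℂ :=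
    U * Matrix.diagonal (fun i => ((r i ^ α : ℝ) : ℂ)) * Uᴴ with hAQ
  set BR : Matrix (Fin d) (Fin d) ℂ :=
    V * Matrix.diagonal (fun i => ((s i ^ (1 - α) : ℝ) : ℂ)) * Vᴴ with hBR
  -- the square root of AQ
  set A2 : Matrix (Fin d) (Fin d) ℂ :=
    U * Matrix.diagonal (fun i => ((Real.sqrt (r i ^ α) : ℝ) : ℂ)) * Uᴴ with hA2def
  have hA2 : A2 * A2 = AQ := by
    rw [hA2def, conj_diag_mul U h1U, hAQ]
    have hfun : (fun i => ((Real.sqrt (r i ^ α) : ℝ) : ℂ) * ((Real.sqrt (r i ^ α) : ℝ) : ℂ))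
        = fun i => ((r i ^ α : ℝ) : ℂ) := by
      funext i
      rw [← Complex.ofReal_mul, Real.mul_self_sqrt (Real.rpow_nonneg (hrpos i) α)]
    rw [hfun]
  have hA2h : A2ᴴ = A2 := conj_diag_isHermitian U _
  have hBh : BRᴴ = BR := conj_diag_isHermitian V _
  -- trace side
  have htr : (mrpow α (qfDensity Q) * mrpow (1 - α) (qfDensity R)).trace
      = ((((∏ i, (1 - μ i)) ^ α : ℝ)) : ℂ) * ((((∏ i, (1 - ν i)) ^ (1 - α) : ℝ)) : ℂ)
        * (1 + AQ * BR).det := by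
    rw [hQf, hRf, Matrix.smul_mul, Matrix.mul_smul, Matrix.trace_smul, Matrix.trace_smul,
      ← gammaOp_mul, trace_gammaOp_mul_eq_det AQ BR A2 hA2 hA2h hBh, smul_eq_mul, smul_eq_mul]
    ring
  -- determinant identities
  have hkey1 : mrpow α (1 - Q) * AQ = mrpow α Q := by
    rw [hP2, hAQ, conj_diag_mul U h1U, hP1]
    have hfun : (fun i => (((1 - μ i) ^ α : ℝ) : ℂ) * ((r i ^ α : ℝ) : ℂ))
        = fun i => ((μ i ^ α : ℝ) : ℂ) := by
      funext i
      rw [← Complex.ofReal_mul]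
      congr 1
      rw [hr, Real.mul_rpow (hμpos i).le (inv_nonneg.mpr (hμlt i).le),
      Real.inv_rpow (hμlt i).le, mul_comm (μ i ^ α) _, ← mul_assoc,
        mul_inv_cancel₀ (Real.rpow_pos_of_pos (hμlt i) α).ne', one_mul]
    rw [hfun]
  have hkey2 : BR * mrpow (1 - α) (1 - R) = mrpow (1 - α) R := by
    rw [hS2, hBR, conj_diag_mul V h1V, hS1]
    have hfun : (fun i => ((s i ^ (1 - α) : ℝ) : ℂ) * (((1 - ν i) ^ (1 - α) : ℝ) : ℂ))
        = fun i => ((ν i ^ (1 - α) : ℝ) : ℂ) := by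
      funext i
      rw [← Complex.ofReal_mul]
      congr 1
      rw [hs, Real.mul_rpow (hνpos i).le (inv_nonneg.mpr (hνlt i).le),
      Real.inv_rpow (hνlt i).le, mul_assoc,
        inv_mul_cancel₀ (Real.rpow_pos_of_pos (hνlt i) (1 - α)).ne', mul_one]
    rw [hfun]
  have hdetP2 : (mrpow α (1 - Q)).det = ((((∏ i, (1 - μ i)) ^ α : ℝ)) : ℂ) := by
    rw [hP2, det_conj' _ _ h1U, Matrix.det_diagonal, ← Complex.ofReal_prod]
    congr 1
    rw [← Real.finset_prod_rpow univ _ (fun i _ => (hμlt i).le)]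
  have hdetS2 : (mrpow (1 - α) (1 - R)).det = ((((∏ i, (1 - ν i)) ^ (1 - α) : ℝ)) : ℂ) := by
    rw [hS2, det_conj' _ _ h1V, Matrix.det_diagonal, ← Complex.ofReal_prod]
    congr 1
    rw [← Real.finset_prod_rpow univ _ (fun i _ => (hνlt i).le)]
  have hexp : mrpow α (1 - Q) * (1 + AQ * BR) * mrpow (1 - α) (1 - R)
      = mrpow α (1 - Q) * mrpow (1 - α) (1 - R)
        + (mrpow α (1 - Q) * AQ) * (BR * mrpow (1 - α) (1 - R)) := by
    noncomm_ring
  rw [htr, ← hdetP2, ← hdetS2]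
  rw [show (mrpow α (1 - Q)).det * (mrpow (1 - α) (1 - R)).det * (1 + AQ * BR).det
      = (mrpow α (1 - Q)).det * (1 + AQ * BR).det * (mrpow (1 - α) (1 - R)).det by ring]
  rw [← Matrix.det_mul, ← Matrix.det_mul, hexp, hkey1, hkey2, add_comm]
end

section
/- Let A, B be positive definite operators on a finite-dimensional Hilbert space and α ∈ ℝ. Then B^{1/2}(B^{-1/2} A B^{-1/2})^α B^{1/2} = A^{1/2}(A^{-1/2} B A^{-1/2})^{1-α} A^{1/2}. -/
open scoped ComplexOrder

section Aux

open Matrix Polynomial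

variable {n : Type*} [Fintype n] [DecidableEq n]

/-- Positive selfadjoint predicate convenient for `cfc` manipulations. -/
def SPos (M : Matrix n n ℂ) : Prop :=
  IsSelfAdjoint M ∧ ∀ x ∈ spectrum ℝ M, (0 : ℝ) < x

lemma Matrix.PosDef.sPos {A : Matrix n n ℂ} (hA : A.PosDef) : SPos A := by
  refine ⟨hA.isHermitian, ?_⟩
  rw [hA.isHermitian.spectrum_real_eq_range_eigenvalues]
  rintro x ⟨i, rfl⟩
  exact hA.eigenvalues_pos i

lemma contOn_rpow {s : Set ℝ} (hs : ∀ t ∈ s, (0 : ℝ) < t) (y : ℝ) :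
    ContinuousOn (fun t : ℝ => t ^ y) s := fun t ht =>
  (Real.continuousAt_rpow_const t y (Or.inl (hs t ht).ne')).continuousWithinAt

lemma sPos_mrpow {M : Matrix n n ℂ} (hM : SPos M) (x : ℝ) : SPos (mrpow x M) := by
  refine ⟨cfc_predicate _ M, ?_⟩
  rw [mrpow, cfc_map_spectrum _ M hM.1 (contOn_rpow hM.2 x)]
  rintro - ⟨t, ht, rfl⟩
  exact Real.rpow_pos_of_pos (hM.2 t ht) x

lemma mrpow_mul_mrpow {M : Matrix n n ℂ} (hM : SPos M) (x y : ℝ) :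
    mrpow x M * mrpow y M = mrpow (x + y) M := by
  rw [mrpow, mrpow, mrpow, ← cfc_mul _ _ M (contOn_rpow hM.2 x) (contOn_rpow hM.2 y)]
  exact cfc_congr fun t ht => (Real.rpow_add (hM.2 t ht) x y).symm

lemma mrpow_zero {M : Matrix n n ℂ} (hM : SPos M) : mrpow 0 M = 1 := by
  rw [mrpow]
  simp only [Real.rpow_zero]
  exact cfc_const_one ℝ M hM.1

lemma mrpow_one {M : Matrix n n ℂ} (hM : SPos M) : mrpow 1 M = M := by
  rw [mrpow, show (fun t : ℝ => t ^ (1 : ℝ)) = id from funext Real.rpow_one]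
  exact cfc_id ℝ M hM.1

lemma mrpow_comp {M : Matrix n n ℂ} (hM : SPos M) (x y : ℝ) :
    mrpow x (mrpow y M) = mrpow (y * x) M := by
  rw [mrpow, mrpow, mrpow, ← cfc_comp _ _ M hM.1 ?hg (contOn_rpow hM.2 y)]
  · exact cfc_congr fun t ht => by
      simp only [Function.comp_apply]
      exact (Real.rpow_mul (hM.2 t ht).le y x).symm
  case hg =>
    refine contOn_rpow ?_ x
    rintro - ⟨t, ht, rfl⟩
    exact Real.rpow_pos_of_pos (hM.2 t ht) y

lemma posDef_conj {A M N : Matrix n n ℂ} (hA : A.PosDef) (h : N * M = 1) :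
    (Mᴴ * A * M).PosDef := by
  refine Matrix.PosDef.of_dotProduct_mulVec_pos (Matrix.isHermitian_conjTranspose_mul_mul M hA.1) fun x hx => ?_
  have hx' : M *ᵥ x ≠ 0 := by
    intro h0
    apply hx
    have hNx : N *ᵥ (M *ᵥ x) = x := by
      rw [Matrix.mulVec_mulVec, h, Matrix.one_mulVec]
    rw [h0, Matrix.mulVec_zero] at hNx
    exact hNx.symm
  simpa only [Matrix.star_mulVec, Matrix.dotProduct_mulVec, Matrix.vecMul_vecMul] using
    hA.dotProduct_mulVec_pos hx'

lemma mul_pow_comm {A B S : Matrix n n ℂ} (h : S * A = B * S) (k : ℕ) :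
    S * A ^ k = B ^ k * S := by
  induction k with
  | zero => simp
  | succ k ih =>
    rw [pow_succ, pow_succ, ← mul_assoc, ih, mul_assoc, h, ← mul_assoc]

lemma mul_aeval_comm {A B S : Matrix n n ℂ} (h : S * A = B * S) (p : ℝ[X]) :
    S * aeval A p = aeval B p * S := by
  induction p using Polynomial.induction_on' with
  | add p q hp hq => simp only [map_add, mul_add, add_mul, hp, hq]
  | monomial k c =>
    simp only [Polynomial.aeval_monomial]
    calc S * (algebraMap ℝ (Matrix n n ℂ) c * A ^ k)
        = algebraMap ℝ (Matrix n n ℂ) c * (S * A ^ k) := by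
          rw [← mul_assoc, ← Algebra.commutes, mul_assoc]
      _ = algebraMap ℝ (Matrix n n ℂ) c * (B ^ k * S) := by rw [mul_pow_comm h]
      _ = algebraMap ℝ (Matrix n n ℂ) c * B ^ k * S := by rw [mul_assoc]

lemma intertwine {A B S : Matrix n n ℂ} (hA : IsSelfAdjoint A) (hB : IsSelfAdjoint B)
    (h : S * A = B * S) (f : ℝ → ℝ) : S * cfc f A = cfc f B * S := by
  have hfin : (spectrum ℝ A ∪ spectrum ℝ B).Finite :=
    Matrix.finite_real_spectrum.union Matrix.finite_real_spectrum
  set s : Finset ℝ := hfin.toFinset with hs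
  set p : ℝ[X] := Lagrange.interpolate s id f with hp
  have hpe : ∀ x ∈ spectrum ℝ A ∪ spectrum ℝ B, p.eval x = f x := by
    intro x hx
    have hxs : x ∈ s := hfin.mem_toFinset.mpr hx
    simpa [hp] using Lagrange.eval_interpolate_at_node (v := id) (r := f)
      (Function.injective_id.injOn) hxs
  have key : ∀ (M : Matrix n n ℂ), IsSelfAdjoint M →
      spectrum ℝ M ⊆ spectrum ℝ A ∪ spectrum ℝ B → cfc f M = aeval M p := by
    intro M hM hsub
    rw [← cfc_polynomial p M hM]
    exact cfc_congr fun x hx => (hpe x (hsub hx)).symm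
  rw [key A hA Set.subset_union_left, key B hB Set.subset_union_right]
  exact mul_aeval_comm h p

lemma mrpow_intertwine {A B S : Matrix n n ℂ} (hA : IsSelfAdjoint A) (hB : IsSelfAdjoint B)
    (h : S * A = B * S) (x : ℝ) : S * mrpow x A = mrpow x B * S :=
  intertwine hA hB h _

end Aux

/-- `B^{1/2}(B^{-1/2} A B^{-1/2})^α B^{1/2} = A^{1/2}(A^{-1/2} B A^{-1/2})^{1-α} A^{1/2}`
for positive definite matrices `A, B`. -/
theorem geometric_renyi_symm {n : Type*} [Fintype n] [DecidableEq n]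
    (A B : Matrix n n ℂ) (hA : A.PosDef) (hB : B.PosDef) (α : ℝ) :
    mrpow (1 / 2) B * mrpow α (mrpow (-(1 / 2)) B * A * mrpow (-(1 / 2)) B) * mrpow (1 / 2) B
      = mrpow (1 / 2) A * mrpow (1 - α) (mrpow (-(1 / 2)) A * B * mrpow (-(1 / 2)) A) *
          mrpow (1 / 2) A := by
  have hAs : SPos A := hA.sPos
  have hBs : SPos B := hB.sPos
  set a := mrpow (1 / 2) A with ha_def
  set a' := mrpow (-(1 / 2)) A with ha'_def
  set b := mrpow (1 / 2) B with hb_def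
  set b' := mrpow (-(1 / 2)) B with hb'_def
  have ha : SPos a := sPos_mrpow hAs _
  have ha' : SPos a' := sPos_mrpow hAs _
  have hb : SPos b := sPos_mrpow hBs _
  have hb' : SPos b' := sPos_mrpow hBs _
  have haa : a * a = A := by
    rw [ha_def, mrpow_mul_mrpow hAs]; norm_num [mrpow_one hAs]
  have hbb : b * b = B := by
    rw [hb_def, mrpow_mul_mrpow hBs]; norm_num [mrpow_one hBs]
  have haa' : a * a' = 1 := by
    rw [ha_def, ha'_def, mrpow_mul_mrpow hAs]; norm_num [mrpow_zero hAs]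
  have ha'a : a' * a = 1 := by
    rw [ha_def, ha'_def, mrpow_mul_mrpow hAs]; norm_num [mrpow_zero hAs]
  have hbb' : b * b' = 1 := by
    rw [hb_def, hb'_def, mrpow_mul_mrpow hBs]; norm_num [mrpow_zero hBs]
  have hb'b : b' * b = 1 := by
    rw [hb_def, hb'_def, mrpow_mul_mrpow hBs]; norm_num [mrpow_zero hBs]
  -- cancellation helpers (right-associated)
  have ca : ∀ X : Matrix n n ℂ, a * (a' * X) = X := fun X => by rw [← mul_assoc, haa', one_mul]
  have ca' : ∀ X : Matrix n n ℂ, a' * (a * X) = X := fun X => by rw [← mul_assoc, ha'a, one_mul]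
  have cb : ∀ X : Matrix n n ℂ, b * (b' * X) = X := fun X => by rw [← mul_assoc, hbb', one_mul]
  have cb' : ∀ X : Matrix n n ℂ, b' * (b * X) = X := fun X => by rw [← mul_assoc, hb'b, one_mul]
  have mA : ∀ X : Matrix n n ℂ, a * (a * X) = A * X := fun X => by rw [← mul_assoc, haa]
  have mB : ∀ X : Matrix n n ℂ, b * (b * X) = B * X := fun X => by rw [← mul_assoc, hbb]
  set C : Matrix n n ℂ := b' * A * b' with hC_def
  set C' : Matrix n n ℂ := a' * B * a' with hC'_def
  set D : Matrix n n ℂ := a * b' * (b' * a) with hD_def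
  have haH : a.conjTranspose = a := ha.1
  have hb'H : b'.conjTranspose = b' := hb'.1
  -- positivity
  have hCpos : C.PosDef := by
    have := posDef_conj (M := b') (N := b) hA hbb'
    rwa [hb'H] at this
  have hDpos : D.PosDef := by
    have h1 : (a' * b) * (b' * a) = 1 := by
      simp only [mul_assoc]
      rw [cb, ha'a]
    have := posDef_conj (M := b' * a) (N := a' * b) Matrix.PosDef.one h1
    rw [Matrix.conjTranspose_mul, haH, hb'H, mul_one] at this
    rwa [hD_def]
  have hCs : SPos C := hCpos.sPos
  have hDs : SPos D := hDpos.sPos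
  -- intertwining: (a * b') * C = D * (a * b')
  have key1 : (a * b') * C = D * (a * b') := by
    simp only [hC_def, hD_def, mul_assoc]
    rw [mA]
  have key2 : (a * b') * mrpow α C = mrpow α D * (a * b') :=
    mrpow_intertwine hCs.1 hDs.1 key1 α
  set X := mrpow α D with hX_def
  have hmC : mrpow α C = b * (a' * (X * (a * b'))) := by
    have h2 := congrArg (fun M => (b * a') * M) key2
    simp only [mul_assoc] at h2
    rw [ca'] at h2
    rw [cb] at h2
    exact h2
  -- C' is the inverse of D, and equals mrpow (-1) D
  have hC'D : C' * D = 1 := by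
    simp only [hC'_def, hD_def, mul_assoc]
    rw [ca', ← hbb]
    simp only [mul_assoc]
    rw [cb, cb, ha'a]
  have hDC' : D * C' = 1 := by
    simp only [hC'_def, hD_def, mul_assoc]
    rw [ca, ← hbb]
    simp only [mul_assoc]
    rw [cb', cb', haa']
  have hDinv : D * mrpow (-1) D = 1 := by
    nth_rewrite 1 [← mrpow_one hDs]
    rw [mrpow_mul_mrpow hDs]
    norm_num [mrpow_zero hDs]
  have hC'eq : C' = mrpow (-1) D := by
    calc C' = C' * (D * mrpow (-1) D) := by rw [hDinv, mul_one]
      _ = C' * D * mrpow (-1) D := (mul_assoc C' D _).symm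
      _ = mrpow (-1) D := by rw [hC'D, one_mul]
  -- compute mrpow (1 - α) C'
  have hmC' : mrpow (1 - α) C' = X * C' := by
    rw [hC'eq, mrpow_comp hDs, show (-1 : ℝ) * (1 - α) = α + -1 by ring,
      ← mrpow_mul_mrpow hDs α (-1), hX_def]
  have hcomm : C' * X = X * C' := by
    rw [hC'eq, hX_def, mrpow_mul_mrpow hDs, mrpow_mul_mrpow hDs,
      show (-1 : ℝ) + α = α + -1 by ring]
  -- finish
  rw [hmC, hmC']
  -- LHS: b * (b * (a' * (X * (a * b')))) * b
  calc b * (b * (a' * (X * (a * b')))) * b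
      = b * (b * (a' * (X * (a * (b' * b))))) := by simp only [mul_assoc]
    _ = B * (a' * (X * a)) := by rw [hb'b, mul_one, mB]
    _ = a * (C' * (X * a)) := by
        rw [hC'_def]
        simp only [mul_assoc]
        rw [ca]
    _ = a * (X * (C' * a)) := by
        have hstep : C' * (X * a) = X * (C' * a) := by
          rw [← mul_assoc, hcomm, mul_assoc]
        rw [hstep]
    _ = a * (X * C') * a := by simp only [mul_assoc]
end

section
/- Let ω, σ be positive semidefinite operators on a finite-dimensional Hilbert space with supp(ω) ≤ supp(σ), and let r be the number of distinct nonzero eigenvalues of σ. Then ω ≤ r·P_σ(ω), where P_σ(ω) := ∑_{λ ∈ spec(σ)} P_λ ω P_λ is the pinching of ω by the spectral projections P_λ of σ. -/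
open scoped ComplexOrder
open Matrix

lemma continuousOn_of_finite' {s : Set ℝ} (hs : s.Finite) (f : ℝ → ℝ) : ContinuousOn f s := by
  rw [continuousOn_iff_continuous_restrict]
  have : Finite s := hs
  have : DiscreteTopology s := Finite.instDiscreteTopology
  exact continuous_of_discreteTopology

lemma posSemidef_real_smul {n : Type*} [Fintype n] {A : Matrix n n ℂ} (hA : A.PosSemidef)
    {c : ℝ} (hc : 0 ≤ c) : ((c : ℂ) • A).PosSemidef := by
  constructor
  · unfold Matrix.IsHermitian
    rw [Matrix.conjTranspose_smul, hA.1]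
    norm_num
  · intro x
    exact (hA.smul (a := (c : ℂ)) (by exact_mod_cast hc)).2 x

lemma posSemidef_finsetSum {n ι : Type*} [Fintype n] (s : Finset ι) (f : ι → Matrix n n ℂ)
    (h : ∀ i ∈ s, (f i).PosSemidef) : (∑ i ∈ s, f i).PosSemidef := by
  classical
  induction s using Finset.induction with
  | empty => simpa using Matrix.PosSemidef.zero
  | insert _ _ hx ih =>
    rw [Finset.sum_insert hx]
    exact (h _ (Finset.mem_insert_self _ _)).add (ih fun i hi => h i (Finset.mem_insert_of_mem hi))

lemma key_identity {n : Type*} [Fintype n] (S : Finset ℝ) (x : ℝ → Matrix n n ℂ) :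
    (S.card : ℂ) • ∑ l ∈ S, (x l)ᴴ * x l - (∑ l ∈ S, x l)ᴴ * (∑ m ∈ S, x m)
      = (((2 : ℝ)⁻¹ : ℂ)) • ∑ l ∈ S, ∑ m ∈ S, ((x l - x m)ᴴ * (x l - x m)) := by
  have expand : ∀ l m, (x l - x m)ᴴ * (x l - x m)
      = (x l)ᴴ * x l - (x l)ᴴ * x m - (x m)ᴴ * x l + (x m)ᴴ * x m := by
    intro l m
    simp only [Matrix.conjTranspose_sub, sub_mul, mul_sub]
    abel
  have h1 : ∑ l ∈ S, ∑ m ∈ S, (x l)ᴴ * x m = (∑ l ∈ S, x l)ᴴ * (∑ m ∈ S, x m) := by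
    rw [Matrix.conjTranspose_sum, Finset.sum_mul]
    exact Finset.sum_congr rfl fun l _ => (Finset.mul_sum _ _ _).symm
  have h2 : ∑ l ∈ S, ∑ m ∈ S, (x m)ᴴ * x l = (∑ l ∈ S, x l)ᴴ * (∑ m ∈ S, x m) := by
    rw [Finset.sum_comm]; exact h1
  have h3 : ∑ l ∈ S, ∑ _m ∈ S, (x l)ᴴ * x l = (S.card : ℂ) • ∑ l ∈ S, (x l)ᴴ * x l := by
    simp_rw [Finset.sum_const, Finset.smul_sum.symm, Nat.cast_smul_eq_nsmul]
  have h4 : ∑ l ∈ S, ∑ m ∈ S, (x m)ᴴ * x m = (S.card : ℂ) • ∑ l ∈ S, (x l)ᴴ * x l := by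
    rw [Finset.sum_comm]; exact h3
  have hsum : ∑ l ∈ S, ∑ m ∈ S, ((x l - x m)ᴴ * (x l - x m))
      = (2 : ℂ) • ((S.card : ℂ) • ∑ l ∈ S, (x l)ᴴ * x l
          - (∑ l ∈ S, x l)ᴴ * (∑ m ∈ S, x m)) := by
    simp_rw [expand, Finset.sum_add_distrib, Finset.sum_sub_distrib]
    rw [h1, h2, h3, h4]
    module
  rw [hsum, smul_smul]
  norm_num

/-- Improved pinching inequality: if `supp ω ≤ supp σ` and `r` is the number of distinct
nonzero eigenvalues of `σ`, then `ω ≤ r · P_σ(ω)`, where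
`P_σ(ω) = ∑_{λ ∈ spec σ} P_λ ω P_λ` is the pinching of `ω` by the spectral projections of `σ`. -/
theorem pinching_improved {n : Type*} [Fintype n] [DecidableEq n]
    (ω σ : Matrix n n ℂ) (hω : ω.PosSemidef) (hσ : σ.PosSemidef)
    (hsupp : ∀ v, σ.mulVec v = 0 → ω.mulVec v = 0) :
    ((((spectrum ℝ σ \ {0}).ncard : ℂ) •
        ∑ lam ∈ (Matrix.finite_real_spectrum (A := σ)).toFinset,
          hσ.1.cfc (fun t => if t = lam then 1 else 0) * ω *
            hσ.1.cfc (fun t => if t = lam then 1 else 0)) - ω).PosSemidef := by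
  classical
  have hfin : (spectrum ℝ σ).Finite := Matrix.finite_real_spectrum
  have hc : ∀ f : ℝ → ℝ, ContinuousOn f (spectrum ℝ σ) :=
    fun f => continuousOn_of_finite' hfin f
  have hsa : IsSelfAdjoint σ := hσ.1
  set P : ℝ → Matrix n n ℂ := fun lam => cfc (fun t => if t = lam then (1:ℝ) else 0) σ with hPdef
  have hcfc_eq : ∀ lam : ℝ,
      hσ.1.cfc (fun t => if t = lam then (1:ℝ) else 0) = P lam := by
    intro lam
    simp only [hPdef]
    exact (hσ.1.cfc_eq _).symm
  have hPH : ∀ lam, (P lam)ᴴ = P lam := by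
    intro lam
    have : IsSelfAdjoint (P lam) := cfc_predicate _ σ
    exact this
  set T : Finset ℝ := hfin.toFinset with hTdef
  have hsum1 : ∑ lam ∈ T, P lam = 1 := by
    rw [hPdef]
    rw [← cfc_sum _ σ T (fun i _ => hc _)]
    have : cfc (∑ lam ∈ T, fun t => if t = lam then (1:ℝ) else 0) σ = cfc (1 : ℝ → ℝ) σ := by
      apply cfc_congr
      intro t ht
      have htT : t ∈ T := by simpa [hTdef] using ht
      simp only [Finset.sum_apply, Pi.one_apply]
      rw [Finset.sum_ite_eq T t (fun _ => (1:ℝ))]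
      simp [htT]
    rw [this]
    exact cfc_one ℝ σ
  have hσP0 : σ * P 0 = 0 := by
    conv_lhs => rw [← cfc_id ℝ σ, hPdef]
    rw [← cfc_mul _ _ σ (hc _) (hc _)]
    have : (fun t : ℝ => id t * (if t = 0 then (1:ℝ) else 0)) = (0 : ℝ → ℝ) := by
      funext t
      by_cases h : t = 0 <;> simp [h]
    rw [this, cfc_zero]
  have hωP0 : ω * P 0 = 0 := by
    have hv : ∀ v, (ω * P 0).mulVec v = 0 := by
      intro v
      rw [← Matrix.mulVec_mulVec]
      refine hsupp _ ?_
      rw [Matrix.mulVec_mulVec, hσP0, Matrix.zero_mulVec]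
    ext i j
    have := congrFun (hv (Pi.single j 1)) i
    rw [Matrix.mulVec_single_one] at this
    simpa using this
  obtain ⟨A, hA2, hAH⟩ : ∃ A : Matrix n n ℂ, A * A = ω ∧ Aᴴ = A := by
    open scoped MatrixOrder in
    exact ⟨CFC.sqrt ω, CFC.sqrt_mul_sqrt_self ω hω.nonneg, (CFC.sqrt_nonneg ω).posSemidef.1⟩
  have hAP0 : A * P 0 = 0 := by
    rw [← Matrix.conjTranspose_mul_self_eq_zero (A := A * P 0)]
    rw [Matrix.conjTranspose_mul, hAH, hPH]
    have h : P 0 * A * (A * P 0) = P 0 * (ω * P 0) := by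
      rw [← hA2]; noncomm_ring
    rw [h, hωP0, mul_zero]
  set x : ℝ → Matrix n n ℂ := fun lam => A * P lam with hxdef
  set S : Finset ℝ := T.erase 0 with hSdef
  have hxsum : ∑ lam ∈ S, x lam = A := by
    rw [hSdef, Finset.sum_erase _ (by rw [hxdef]; exact hAP0)]
    rw [hxdef, ← Finset.mul_sum, hsum1, mul_one]
  have hterm : ∀ lam, P lam * ω * P lam = (x lam)ᴴ * x lam := by
    intro lam
    rw [hxdef, Matrix.conjTranspose_mul, hAH, hPH]
    rw [← hA2]
    simp [mul_assoc]
  have hTsum : ∑ lam ∈ T, P lam * ω * P lam = ∑ lam ∈ S, (x lam)ᴴ * x lam := by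
    rw [hSdef, Finset.sum_erase _ (f := fun lam => (x lam)ᴴ * x lam)
      (by rw [hxdef]; simp [hAP0])]
    exact Finset.sum_congr rfl fun lam _ => hterm lam
  have hω_eq : ω = (∑ lam ∈ S, x lam)ᴴ * (∑ mu ∈ S, x mu) := by
    rw [hxsum, hAH, hA2]
  have hcard : ((spectrum ℝ σ \ {0}).ncard : ℂ) = (S.card : ℂ) := by
    norm_cast
    have hfin' : (spectrum ℝ σ \ {0}).Finite := hfin.diff
    rw [Set.ncard_eq_toFinset_card _ hfin']
    rw [Set.Finite.toFinset_sdiff hfin (Set.finite_singleton 0) hfin']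
    rw [hSdef, Finset.erase_eq, Set.Finite.toFinset_singleton]
  simp only [hcfc_eq]
  rw [hTsum, hcard]
  rw [hω_eq]
  rw [key_identity S x]
  have hpsd : (∑ l ∈ S, ∑ m ∈ S, ((x l - x m)ᴴ * (x l - x m))).PosSemidef :=
    posSemidef_finsetSum _ _ fun l _ =>
      posSemidef_finsetSum _ _ fun m _ => Matrix.posSemidef_conjTranspose_mul_self _
  rw [← Complex.ofReal_inv]
  exact posSemidef_real_smul (c := (2:ℝ)⁻¹) hpsd (by norm_num)
end

section
/- Let g ∈ L^∞ on the torus 𝕋 with values in d×d complex matrices, let G be the corresponding block Toeplitz operator on ℓ²(ℤ)⊗ℂ^d (i.e. G = F^{-1} M_g F with F the component-wise Fourier transform), and let G_n = P_n G P_n with P_n the projection onto sites {0,…,n−1}. Then for each k ∈ {0,…,n−1}, the (k,k)-th d×d diagonal block of F_n G_n F_n* (where F_n is the discrete Fourier transform on ℓ²({0,…,n−1}) tensored with I_d) equals (1/2π)∫_{−π}^{π} Φ_n(y)·g(2πk/n − y) dy, where Φ_n is the Fejér kernel. -/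
open Real MeasureTheory

/-- The `m`-th (matrix) Fourier coefficient of a `2π`-periodic matrix-valued symbol `g`:
this is the entry of the block Toeplitz operator `G = F⁻¹ M_g F` at block-distance `m`. -/
noncomputable def toeplitzCoeff {d : ℕ} (g : ℝ → Matrix (Fin d) (Fin d) ℂ) (m : ℤ)
    (a b : Fin d) : ℂ :=
  (1 / (2 * π) : ℂ) * ∫ x in (-π)..π, g x a b * Complex.exp (-Complex.I * m * x)

noncomputable def Ssum (n : ℕ) (θ : ℝ) : ℂ := ∑ j : Fin n, Complex.exp (Complex.I * j * θ)

lemma norm_exp_I_nat_real (m : ℕ) (θ : ℝ) : ‖Complex.exp (Complex.I * m * θ)‖ = 1 := by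
  rw [Complex.norm_exp]
  simp [Complex.mul_re]

lemma norm_Ssum_le (n : ℕ) (θ : ℝ) : ‖Ssum n θ‖ ≤ n := by
  unfold Ssum
  refine le_trans (norm_sum_le _ _) ?_
  rw [Finset.sum_congr rfl fun (j : Fin n) _ => norm_exp_I_nat_real (j:ℕ) θ]
  simp

lemma continuous_Ssum (n : ℕ) : Continuous (Ssum n) := by
  unfold Ssum
  refine continuous_finset_sum _ fun j _ => Complex.continuous_exp.comp (by continuity)

lemma intervalIntegrable_of_bdd {f : ℝ → ℂ} (hf : AEStronglyMeasurable f volume) {C : ℝ}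
    (hC : ∀ x, ‖f x‖ ≤ C) (a b : ℝ) : IntervalIntegrable f volume a b := by
  rw [intervalIntegrable_iff]
  refine Integrable.mono' (g := fun _ => C) ?_ hf.restrict (ae_of_all _ fun x => hC x)
  exact integrableOn_const measure_Ioc_lt_top.ne

lemma Ssum_neg (n : ℕ) (θ : ℝ) : Ssum n (-θ) = (starRingEnd ℂ) (Ssum n θ) := by
  unfold Ssum
  rw [map_sum]
  refine Finset.sum_congr rfl fun j _ => ?_
  rw [← Complex.exp_conj]
  congr 1
  simp [map_mul, Complex.conj_I, Complex.conj_ofReal]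

lemma normSq_exp_sub_one (t : ℝ) :
    Complex.normSq (Complex.exp (Complex.I * t) - 1) = 4 * Real.sin (t/2) ^ 2 := by
  have h : Complex.exp (Complex.I * t) = Complex.cos t + Complex.sin t * Complex.I := by
    rw [mul_comm, Complex.exp_mul_I]
  rw [h]
  have h2 := Real.cos_sq (t/2)
  have h3 : 2 * (t/2) = t := by ring
  rw [h3] at h2
  simp [Complex.normSq_apply, Complex.cos_ofReal_re, Complex.sin_ofReal_re,
    Complex.cos_ofReal_im, Complex.sin_ofReal_im]
  nlinarith [Real.sin_sq_add_cos_sq t, Real.sin_sq_add_cos_sq (t/2)]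

lemma exp_I_ne_one {θ : ℝ} (hθ : Real.sin (θ/2) ≠ 0) : Complex.exp (Complex.I * θ) ≠ 1 := by
  intro h
  rw [Complex.exp_eq_one_iff] at h
  obtain ⟨m, hm⟩ := h
  have him := congrArg Complex.im hm
  simp at him
  apply hθ
  rw [him]
  have h5 : (m:ℝ) * (2*π) / 2 = m * π := by ring
  rw [h5, Real.sin_int_mul_pi]

lemma Ssum_geom {n : ℕ} {θ : ℝ} (hθ : Real.sin (θ/2) ≠ 0) :
    Ssum n θ = (Complex.exp (Complex.I * (n * θ)) - 1) / (Complex.exp (Complex.I * θ) - 1) := by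
  have hne := exp_I_ne_one hθ
  have h : Ssum n θ = ∑ j ∈ Finset.range n, (Complex.exp (Complex.I * θ)) ^ j := by
    unfold Ssum
    rw [Fin.sum_univ_eq_sum_range (fun j => Complex.exp (Complex.I * (j:ℕ) * θ))]
    refine Finset.sum_congr rfl fun j _ => ?_
    rw [← Complex.exp_nat_mul]
    ring_nf
  rw [h, geom_sum_eq hne, ← Complex.exp_nat_mul]
  ring_nf

lemma Ssum_normSq {n : ℕ} {θ : ℝ} (hθ : Real.sin (θ/2) ≠ 0) :
    Complex.normSq (Ssum n θ) = Real.sin (n*θ/2) ^ 2 / Real.sin (θ/2) ^ 2 := by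
  rw [Ssum_geom hθ, Complex.normSq_div]
  have h1 : Complex.normSq (Complex.exp (Complex.I * ((n*θ:ℝ):ℂ)) - 1)
      = 4 * Real.sin ((n*θ)/2) ^ 2 := normSq_exp_sub_one (n*θ)
  push_cast at h1
  rw [h1, normSq_exp_sub_one θ]
  have h4 : Real.sin (θ/2) ^ 2 ≠ 0 := pow_ne_zero _ hθ
  field_simp

lemma Ssum_add_int (n : ℕ) (θ : ℝ) (m : ℤ) : Ssum n (θ + m * (2*π)) = Ssum n θ := by
  unfold Ssum
  refine Finset.sum_congr rfl fun j _ => ?_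
  rw [show Complex.I * (j:ℕ) * ((θ + m*(2*π) : ℝ) : ℂ)
      = Complex.I * (j:ℕ) * (θ:ℂ) + (((j:ℕ)*m : ℤ) : ℂ) * (2*π*Complex.I) by push_cast; ring,
    Complex.exp_add, Complex.exp_int_mul_two_pi_mul_I, mul_one]

lemma Kker_eq_fejer {n : ℕ} (hn : 0 < n) {θ : ℝ} (h1 : -π ≤ θ) (h2 : θ ≤ π) :
    Ssum n θ * Ssum n (-θ) = (n : ℂ) * (fejerKernel n θ : ℝ) := by
  have hπ := Real.pi_pos
  by_cases h0 : θ = 0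
  · subst h0
    have h : Ssum n 0 = (n : ℂ) := by
      unfold Ssum
      simp
    rw [neg_zero, h, fejerKernel]
    simp
  · have hs : Real.sin (θ/2) ≠ 0 := by
      intro h
      have := (Real.sin_eq_zero_iff_of_lt_of_lt
        (show -π < θ/2 by linarith) (show θ/2 < π by linarith)).1 h
      apply h0; linarith
    rw [Ssum_neg, Complex.mul_conj, Ssum_normSq hs, fejerKernel, if_neg h0]
    have hn' : (n:ℝ) ≠ 0 := Nat.cast_ne_zero.2 hn.ne'
    have hre : (Real.sin (n*θ/2)^2 / Real.sin (θ/2)^2)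
        = n * ((1/n) * Real.sin (n*θ/2)^2 / Real.sin (θ/2)^2) := by
      field_simp
    rw [hre]
    push_cast
    ring

set_option maxHeartbeats 1000000 in
/-- The `(k,k)`-th `d×d` diagonal block of `F_n G_n F_n*`, where `G_n = P_n G P_n` is the
truncation of the block Toeplitz operator with symbol `g` and `F_n` is the discrete Fourier
transform (tensored with the identity), equals `(1/2π)∫_{−π}^{π} Φ_n(y)·g(2πk/n − y) dy`. -/
theorem diagonal_block_dft_toeplitz {d : ℕ} (g : ℝ → Matrix (Fin d) (Fin d) ℂ)
    (hmeas : ∀ a b, Measurable fun x => g x a b)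
    (hbdd : ∃ C, ∀ x a b, ‖g x a b‖ ≤ C)
    (hper : ∀ x, g (x + 2 * π) = g x)
    (n : ℕ) (hn : 0 < n) (k : Fin n) (a b : Fin d) :
    (1 / n : ℂ) * ∑ j : Fin n, ∑ j' : Fin n,
        Complex.exp (Complex.I * (2 * π * k * j / n)) *
          toeplitzCoeff g ((j : ℤ) - (j' : ℤ)) a b *
          Complex.exp (-Complex.I * (2 * π * k * j' / n))
      = (1 / (2 * π) : ℂ) *
          ∫ y in (-π)..π, (fejerKernel n y : ℂ) * g (2 * π * k / n - y) a b := by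
  obtain ⟨C, hC⟩ := hbdd
  have hπ := Real.pi_pos
  have hnR : (n:ℝ) ≠ 0 := Nat.cast_ne_zero.2 hn.ne'
  have hnC : (n:ℂ) ≠ 0 := Nat.cast_ne_zero.2 hn.ne'
  have hmg : Measurable fun x => g x a b := hmeas a b
  set c : ℝ := 2 * π * (k:ℕ) / n with hc
  -- the integrand after combining exponentials
  set F : Fin n → Fin n → ℝ → ℂ := fun j j' x =>
    g x a b * (Complex.exp (Complex.I * (j:ℕ) * ((c - x : ℝ) : ℂ)) *
      Complex.exp (Complex.I * (j':ℕ) * ((-(c - x) : ℝ) : ℂ))) with hF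
  -- each F j j' is interval integrable
  have hFint : ∀ (j j' : Fin n), IntervalIntegrable (F j j') volume (-π) π := by
    intro j j'
    refine intervalIntegrable_of_bdd ?_ (C := C * 1) ?_ (-π) π
    · refine (hmg.mul ?_).aestronglyMeasurable
      refine Measurable.mul ?_ ?_ <;>
        exact (Complex.measurable_exp.comp (by fun_prop))
    · intro x
      rw [hF]
      simp only [norm_mul]
      have e1 : ‖Complex.exp (Complex.I * (j:ℕ) * ((c - x : ℝ):ℂ))‖ = 1 :=
        norm_exp_I_nat_real j (c - x)
      have e2 : ‖Complex.exp (Complex.I * (j':ℕ) * ((-(c - x) : ℝ):ℂ))‖ = 1 :=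
        norm_exp_I_nat_real j' (-(c - x))
      rw [e1, e2]
      simpa using hC x a b
  -- Step 1: rewrite each summand as an integral of F
  have step1 : ∀ (j j' : Fin n),
      Complex.exp (Complex.I * (2 * π * k * j / n)) *
          toeplitzCoeff g ((j : ℤ) - (j' : ℤ)) a b *
          Complex.exp (-Complex.I * (2 * π * k * j' / n))
        = (1 / (2 * π) : ℂ) * ∫ x in (-π)..π, F j j' x := by
    intro j j'
    rw [toeplitzCoeff]
    have hpt : ∀ x : ℝ, F j j' x =
        (Complex.exp (Complex.I * (2 * π * k * j / n)) *
          Complex.exp (-Complex.I * (2 * π * k * j' / n))) *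
          (g x a b * Complex.exp (-Complex.I * (((j:ℤ) - (j':ℤ) : ℤ):ℂ) * x)) := by
      intro x
      rw [hF]
      simp only
      have hee : Complex.exp (Complex.I * (j:ℕ) * ((c - x : ℝ) : ℂ)) *
          Complex.exp (Complex.I * (j':ℕ) * ((-(c - x) : ℝ) : ℂ))
          = Complex.exp (Complex.I * (2 * π * k * j / n)) *
            Complex.exp (-Complex.I * (2 * π * k * j' / n)) *
            Complex.exp (-Complex.I * (((j:ℤ) - (j':ℤ) : ℤ):ℂ) * x) := by
        rw [← Complex.exp_add, ← Complex.exp_add, ← Complex.exp_add]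
        congr 1
        rw [hc]
        push_cast
        ring
      rw [hee]
      ring
    rw [show (∫ x in (-π)..π, F j j' x) =
        ∫ x in (-π)..π, (Complex.exp (Complex.I * (2 * π * k * j / n)) *
          Complex.exp (-Complex.I * (2 * π * k * j' / n))) *
          (g x a b * Complex.exp (-Complex.I * (((j:ℤ) - (j':ℤ) : ℤ):ℂ) * x)) from
      intervalIntegral.integral_congr fun x _ => hpt x]
    rw [intervalIntegral.integral_const_mul]
    push_cast
    ring
  -- Step 2: swap sums with the integral
  have step2 : ∑ j : Fin n, ∑ j' : Fin n,
      Complex.exp (Complex.I * (2 * π * k * j / n)) *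
        toeplitzCoeff g ((j : ℤ) - (j' : ℤ)) a b *
        Complex.exp (-Complex.I * (2 * π * k * j' / n))
      = (1 / (2 * π) : ℂ) * ∫ x in (-π)..π, ∑ j : Fin n, ∑ j' : Fin n, F j j' x := by
    have hsumint : ∀ j : Fin n,
        IntervalIntegrable (fun x => ∑ j' : Fin n, F j j' x) volume (-π) π := by
      intro j
      have h := IntervalIntegrable.sum (μ := volume) (a := -π) (b := π) Finset.univ
        (f := fun j' => F j j') (fun j' _ => hFint j j')
      have he : (∑ j' ∈ Finset.univ, F j j') = fun x => ∑ j' : Fin n, F j j' x := by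
        funext x
        simp [Finset.sum_apply]
      rwa [he] at h
    have h2 : (∫ x in (-π)..π, ∑ j : Fin n, ∑ j' : Fin n, F j j' x)
        = ∑ j : Fin n, ∫ x in (-π)..π, ∑ j' : Fin n, F j j' x :=
      intervalIntegral.integral_finset_sum (fun j _ => hsumint j)
    have h1 : ∀ j : Fin n, (∫ x in (-π)..π, ∑ j' : Fin n, F j j' x)
        = ∑ j' : Fin n, ∫ x in (-π)..π, F j j' x := fun j =>
      intervalIntegral.integral_finset_sum (fun j' _ => hFint j j')
    rw [h2, Finset.mul_sum]
    refine Finset.sum_congr rfl fun j _ => ?_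
    rw [h1 j, Finset.mul_sum]
    exact Finset.sum_congr rfl fun j' _ => step1 j j'
  -- The double sum is g·(Ssum·Ssum)
  have step3 : ∀ x : ℝ, ∑ j : Fin n, ∑ j' : Fin n, F j j' x
      = g x a b * (Ssum n (c - x) * Ssum n (-(c - x))) := by
    intro x
    rw [Ssum, Ssum, Finset.sum_mul_sum, Finset.mul_sum]
    refine Finset.sum_congr rfl fun j _ => ?_
    rw [Finset.mul_sum]
  rw [step2]
  rw [show (∫ x in (-π)..π, ∑ j : Fin n, ∑ j' : Fin n, F j j' x)
      = ∫ x in (-π)..π, g x a b * (Ssum n (c - x) * Ssum n (-(c - x))) from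
    intervalIntegral.integral_congr fun x _ => step3 x]
  -- Step 4: substitution y = c − x
  set f : ℝ → ℂ := fun y => g (c - y) a b * (Ssum n y * Ssum n (-y)) with hf
  have step4 : (∫ x in (-π)..π, g x a b * (Ssum n (c - x) * Ssum n (-(c - x))))
      = ∫ y in (c - π)..(c + π), f y := by
    have h1 : (∫ x in (-π)..π, f (c - x)) = ∫ y in (c - π)..(c - -π), f y :=
      intervalIntegral.integral_comp_sub_left f c
    rw [show c - -π = c + π by ring] at h1
    rw [← h1]
    refine intervalIntegral.integral_congr fun x _ => ?_
    rw [hf]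
    simp only
    rw [show c - (c - x) = x by ring]
  rw [step4]
  -- Step 5: periodicity shift
  have hfper : Function.Periodic f (2 * π) := by
    intro y
    rw [hf]
    simp only
    have e1 : Ssum n (y + 2 * π) = Ssum n y := by
      have := Ssum_add_int n y 1
      rwa [show y + (1:ℤ) * (2*π) = y + 2*π by push_cast; ring] at this
    have e2 : Ssum n (-(y + 2 * π)) = Ssum n (-y) := by
      have := Ssum_add_int n (-y) (-1)
      rwa [show -y + (-1:ℤ) * (2*π) = -(y + 2*π) by push_cast; ring] at this
    have e3 : g (c - (y + 2 * π)) = g (c - y) := by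
      have h := hper (c - y - 2 * π)
      rw [show c - y - 2*π + 2*π = c - y by ring] at h
      rw [show c - (y + 2*π) = c - y - 2*π by ring, h]
    rw [e1, e2, e3]
  have step5 : (∫ y in (c - π)..(c + π), f y) = ∫ y in (-π)..π, f y := by
    have h := hfper.intervalIntegral_add_eq (c - π) (-π)
    rwa [show c - π + 2*π = c + π by ring, show -π + 2*π = π by ring] at h
  rw [step5]
  -- Step 6: replace the kernel by the Fejér kernel on [−π, π]
  have step6 : (∫ y in (-π)..π, f y)
      = ∫ y in (-π)..π, (n:ℂ) * ((fejerKernel n y : ℂ) * g (c - y) a b) := by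
    refine intervalIntegral.integral_congr fun y hy => ?_
    rw [Set.uIcc_of_le (by linarith)] at hy
    rw [hf]
    simp only
    rw [Kker_eq_fejer hn hy.1 hy.2]
    ring
  rw [step6, intervalIntegral.integral_const_mul]
  field_simp
end
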